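/- arXiv:2110.08311 — 9 statements merged into one kernel-verified Lean document; each statement's English description precedes it below -/
import Mathlib

section
/- Two strict ordered bases 𝔅 and 𝔅' on a topological space X are equivalent if, and only if, they are strictly equivalent, where strict equivalence is defined like equivalence but with the relation ⊆_lax replaced by ⊆_str. -/
universe u v w v'

/-! ## Ordered bases and locally ordered spaces -/

/-- An *ordered subset* of `X`: a pair of a carrier set and a relation on `X`
(intended to be a partial order on the carrier). -/
structure OSet (X : Type u) : Type u where
  carrier : Set X
  le : X → X → Prop

namespace OSet

variable {X : Type u} {Y : Type v}

/-- `B` is a partially ordered subset: the relation only relates elements of the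
carrier, is reflexive on the carrier, antisymmetric and transitive. -/
def IsPoset (B : OSet X) : Prop :=
  (∀ p q, B.le p q → p ∈ B.carrier ∧ q ∈ B.carrier) ∧
  (∀ p ∈ B.carrier, B.le p p) ∧
  (∀ p q, B.le p q → B.le q p → p = q) ∧
  (∀ p q r, B.le p q → B.le q r → B.le p r)

/-- `B ⊆_lax B'`. -/
def laxSub (B B' : OSet X) : Prop :=
  B.carrier ⊆ B'.carrier ∧ ∀ p q, B.le p q → B'.le p q

/-- `B ⊆_str B'` : the carrier is included and `≤_B` is the restriction of `≤_{B'}`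
to the carrier of `B`. -/
def strSub (B B' : OSet X) : Prop :=
  B.carrier ⊆ B'.carrier ∧ ∀ p ∈ B.carrier, ∀ q ∈ B.carrier, (B.le p q ↔ B'.le p q)

/-- Product of two ordered subsets, with the product order. -/
def prod (B : OSet X) (B' : OSet Y) : OSet (X × Y) where
  carrier := B.carrier ×ˢ B'.carrier
  le p q := B.le p.1 q.1 ∧ B'.le p.2 q.2

/-- The restriction of an ordered subset to a subset `S` (of its carrier). -/
def restrict (B : OSet X) (S : Set X) : OSet X where
  carrier := S
  le p q := B.le p q ∧ p ∈ S ∧ q ∈ S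

/-- `B` is a Nachbin ordered (sub)space: its order is closed in the product of the
subspace `B.carrier` (with the topology inherited from `X`) with itself. -/
def IsNachbin [TopologicalSpace X] (B : OSet X) : Prop :=
  IsClosed {p : B.carrier × B.carrier | B.le p.1 p.2}

end OSet

/-- `𝔅` is an *ordered basis* on the topological space `X`. -/
structure IsOrderedBasis {X : Type u} [TopologicalSpace X] (𝔅 : Set (OSet X)) : Prop where
  isPoset : ∀ B ∈ 𝔅, B.IsPoset
  isBasis : TopologicalSpace.IsTopologicalBasis (OSet.carrier '' 𝔅)
  compat : ∀ x : X, ∀ B ∈ 𝔅, ∀ B' ∈ 𝔅, x ∈ B.carrier → x ∈ B'.carrier →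
    ∃ B'' ∈ 𝔅, x ∈ B''.carrier ∧ B''.carrier ⊆ B.carrier ∩ B'.carrier ∧
      ∀ p q, B''.le p q → B.le p q ∧ B'.le p q

/-- `𝔅` is a *strict* ordered basis: the interpolating element `B''` can be chosen
with `B'' ⊆_str B` and `B'' ⊆_str B'`. -/
def IsStrictOrderedBasis {X : Type u} [TopologicalSpace X] (𝔅 : Set (OSet X)) : Prop :=
  IsOrderedBasis 𝔅 ∧
    ∀ x : X, ∀ B ∈ 𝔅, ∀ B' ∈ 𝔅, x ∈ B.carrier → x ∈ B'.carrier →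
      ∃ B'' ∈ 𝔅, x ∈ B''.carrier ∧ B''.strSub B ∧ B''.strSub B'

/-- `𝔅'` is coarser than `𝔅`. -/
def CoarserThan {X : Type u} (𝔅' 𝔅 : Set (OSet X)) : Prop :=
  ∀ x : X, ∀ B' ∈ 𝔅', x ∈ B'.carrier → ∃ B ∈ 𝔅, x ∈ B.carrier ∧ B.laxSub B'

/-- `𝔅'` is strictly coarser than `𝔅` (`⊆_lax` replaced by `⊆_str`). -/
def StrictCoarserThan {X : Type u} (𝔅' 𝔅 : Set (OSet X)) : Prop :=
  ∀ x : X, ∀ B' ∈ 𝔅', x ∈ B'.carrier → ∃ B ∈ 𝔅, x ∈ B.carrier ∧ B.strSub B'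

/-- Two ordered bases are equivalent when each is coarser than the other. -/
def EquivBases {X : Type u} (𝔅 𝔅' : Set (OSet X)) : Prop :=
  CoarserThan 𝔅' 𝔅 ∧ CoarserThan 𝔅 𝔅'

/-- Strict equivalence of ordered bases. -/
def StrictEquivBases {X : Type u} (𝔅 𝔅' : Set (OSet X)) : Prop :=
  StrictCoarserThan 𝔅' 𝔅 ∧ StrictCoarserThan 𝔅 𝔅'

/-- The *open posets* `Ō(𝔅)` determined by an ordered basis `𝔅`. -/
def openPosets {X : Type u} (𝔅 : Set (OSet X)) : Set (OSet X) :=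
  {A | ∀ x ∈ A.carrier, ∃ B ∈ 𝔅, x ∈ B.carrier ∧ B.laxSub A}

/-- `f` is locally increasing at `x`, w.r.t. the ordered bases `𝔅` (source) and
`𝔅'` (target). -/
def LocIncrAt {X : Type u} {Y : Type v} (𝔅 : Set (OSet X)) (𝔅' : Set (OSet Y))
    (f : X → Y) (x : X) : Prop :=
  ∀ B' ∈ 𝔅', f x ∈ B'.carrier →
    ∃ B ∈ 𝔅, x ∈ B.carrier ∧ (∀ p ∈ B.carrier, f p ∈ B'.carrier) ∧
      ∀ p q, B.le p q → B'.le (f p) (f q)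

/-- `f` is locally increasing. -/
def LocIncr {X : Type u} {Y : Type v} (𝔅 : Set (OSet X)) (𝔅' : Set (OSet Y))
    (f : X → Y) : Prop :=
  ∀ x : X, LocIncrAt 𝔅 𝔅' f x

/-- The locally ordered space given by the basis `𝔅` is locally Nachbin. -/
def IsLocallyNachbin {X : Type u} [TopologicalSpace X] (𝔅 : Set (OSet X)) : Prop :=
  ∀ x : X, ∀ O ∈ openPosets 𝔅, x ∈ O.carrier →
    ∃ O' ∈ openPosets 𝔅, x ∈ O'.carrier ∧ O'.laxSub O ∧ O'.IsNachbin

/-- The product ordered basis on `X × Y`. -/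
def prodBasis {X : Type u} {Y : Type v} (𝔅 : Set (OSet X)) (𝔅' : Set (OSet Y)) :
    Set (OSet (X × Y)) :=
  {C | ∃ B ∈ 𝔅, ∃ B' ∈ 𝔅', C = B.prod B'}

/-- A topological space viewed as a locally ordered space: all its open subsets,
each ordered by equality. -/
def trivBasis (T : Type v) [TopologicalSpace T] : Set (OSet T) :=
  {B | ∃ U : Set T, IsOpen U ∧ B = ⟨U, fun p q => p = q ∧ p ∈ U⟩}

/-- A strict inclusion gives a lax inclusion, provided the smaller poset's relation
only relates elements of its carrier. -/
lemma coarser_of_strictCoarser {X : Type u} [TopologicalSpace X] {𝔅 𝔅' : Set (OSet X)}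
    (hob : IsOrderedBasis 𝔅) (h1 : StrictCoarserThan 𝔅' 𝔅) : CoarserThan 𝔅' 𝔅 := by
  intro x B' hB' hx
  obtain ⟨B, hB, hxB, hsub, hiff⟩ := h1 x B' hB' hx
  refine ⟨B, hB, hxB, hsub, fun p q hpq => ?_⟩
  obtain ⟨hp, hq⟩ := (hob.isPoset B hB).1 p q hpq
  exact (hiff p hp q hq).1 hpq

lemma strictCoarser_of_equiv {X : Type u} [TopologicalSpace X] {𝔅 𝔅' : Set (OSet X)}
    (h : IsStrictOrderedBasis 𝔅) (h' : IsStrictOrderedBasis 𝔅')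
    (h1 : CoarserThan 𝔅' 𝔅) (h2 : CoarserThan 𝔅 𝔅') : StrictCoarserThan 𝔅' 𝔅 := by
  intro x B' hB' hx
  obtain ⟨B, hB, hxB, hBB'⟩ := h1 x B' hB' hx
  obtain ⟨C', hC', hxC', hC'B⟩ := h2 x B hB hxB
  obtain ⟨D', hD', hxD', hDC, hDB'⟩ := h'.2 x C' hC' B' hB' hxC' hx
  obtain ⟨E, hE, hxE, hED⟩ := h1 x D' hD' hxD'
  obtain ⟨F, hF, hxF, hFE, hFB⟩ := h.2 x E hE B hB hxE hxB
  refine ⟨F, hF, hxF, fun p hp => hDB'.1 (hED.1 (hFE.1 hp)), fun p hp q hq => ?_⟩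
  constructor
  · intro hpq
    exact hBB'.2 p q ((hFB.2 p hp q hq).1 hpq)
  · intro hpq
    have hpD : p ∈ D'.carrier := hED.1 (hFE.1 hp)
    have hqD : q ∈ D'.carrier := hED.1 (hFE.1 hq)
    have hD : D'.le p q := (hDB'.2 p hpD q hqD).2 hpq
    have hC : C'.le p q := (hDC.2 p hpD q hqD).1 hD
    exact (hFB.2 p hp q hq).2 (hC'B.2 p q hC)

/-- Two strict ordered bases on a topological space are
equivalent if, and only if, they are strictly equivalent. -/
theorem stmt0 {X : Type u} [TopologicalSpace X] (𝔅 𝔅' : Set (OSet X))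
    (h : IsStrictOrderedBasis 𝔅) (h' : IsStrictOrderedBasis 𝔅') :
    EquivBases 𝔅 𝔅' ↔ StrictEquivBases 𝔅 𝔅' := by
  constructor
  · rintro ⟨h1, h2⟩
    exact ⟨strictCoarser_of_equiv h h' h1 h2, strictCoarser_of_equiv h' h h2 h1⟩
  · rintro ⟨h1, h2⟩
    exact ⟨coarser_of_strictCoarser h.1 h1, coarser_of_strictCoarser h'.1 h2⟩
end

section
/- Let (X, ℰ) be a strictly locally ordered space with a chosen strict ordered basis 𝔅 ∈ ℰ. Then (X, ℰ) is a locally Nachbin ordered space if, and only if, for every x ∈ X there is B ∈ 𝔅 containing x such that B (with the topology inherited from X) is a Nachbin ordered space. -/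
universe u v w v'

/-- If `B`'s order agrees with that of a Nachbin `A` on `B.carrier ⊆ A.carrier`,
then `B` is Nachbin. -/
lemma nachbin_of_agree {X : Type u} [TopologicalSpace X] {A B : OSet X}
    (hsub : B.carrier ⊆ A.carrier)
    (hagree : ∀ p ∈ B.carrier, ∀ q ∈ B.carrier, (B.le p q ↔ A.le p q))
    (hA : A.IsNachbin) : B.IsNachbin := by
  have heq : {p : B.carrier × B.carrier | B.le p.1 p.2} =
      (fun p : B.carrier × B.carrier =>
        ((Set.inclusion hsub p.1, Set.inclusion hsub p.2) : A.carrier × A.carrier)) ⁻¹'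
        {p : A.carrier × A.carrier | A.le p.1 p.2} := by
    ext p
    simp only [Set.mem_setOf_eq, Set.mem_preimage, Set.inclusion]
    exact hagree p.1 p.1.2 p.2 p.2.2
  rw [OSet.IsNachbin, heq]
  exact hA.preimage
    (((continuous_inclusion hsub).comp continuous_fst).prodMk
      ((continuous_inclusion hsub).comp continuous_snd))

/-- Every basis element is an open poset. -/
lemma basis_mem_openPosets {X : Type u} [TopologicalSpace X] {𝔅 : Set (OSet X)}
    (h : IsOrderedBasis 𝔅) {B : OSet X} (hB : B ∈ 𝔅) : B ∈ openPosets 𝔅 := by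
  intro x hx
  obtain ⟨B'', hB'', hx'', hsub, hle⟩ := h.compat x B hB B hB hx hx
  exact ⟨B'', hB'', hx'', fun y hy => (hsub hy).1, fun p q hpq => (hle p q hpq).1⟩

/-- A strictly locally ordered space, given by a strict ordered
basis `𝔅`, is locally Nachbin if, and only if, every point belongs to some
`B ∈ 𝔅` which is a Nachbin ordered space (with the topology inherited from
`X`). -/
theorem stmt2 {X : Type u} [TopologicalSpace X] (𝔅 : Set (OSet X))
    (h𝔅 : IsStrictOrderedBasis 𝔅) :
    IsLocallyNachbin 𝔅 ↔ ∀ x : X, ∃ B ∈ 𝔅, x ∈ B.carrier ∧ B.IsNachbin := by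
  obtain ⟨hOB, hstr⟩ := h𝔅
  constructor
  · intro hLN x
    -- find a basis element containing x
    obtain ⟨V, hV, hxV, -⟩ := hOB.isBasis.exists_subset_of_mem_open (Set.mem_univ x) isOpen_univ
    obtain ⟨B, hB, rfl⟩ := hV
    obtain ⟨O', hO', hxO', hO'B, hN⟩ := hLN x B (basis_mem_openPosets hOB hB) hxV
    -- O' is an open poset, so there's B₀ ∈ 𝔅 with x ∈ B₀, B₀ laxSub O'
    obtain ⟨B₀, hB₀, hxB₀, hB₀O'⟩ := hO' x hxO'
    -- strict interpolation between B₀ and B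
    obtain ⟨B'', hB'', hxB'', hsB₀, hsB⟩ := hstr x B₀ hB₀ B hB hxB₀ (hO'B.1 (hB₀O'.1 hxB₀))
    refine ⟨B'', hB'', hxB'', ?_⟩
    -- B''.le agrees with O'.le on B''.carrier
    have hsubO' : B''.carrier ⊆ O'.carrier := fun y hy => hB₀O'.1 (hsB₀.1 hy)
    refine nachbin_of_agree hsubO' (fun p hp q hq => ?_) hN
    constructor
    · intro h
      exact hB₀O'.2 p q ((hsB₀.2 p hp q hq).1 h)
    · intro h
      exact (hsB.2 p hp q hq).2 (hO'B.2 p q h)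
  · intro hAll x O hO hxO
    obtain ⟨B, hB, hxB, hN⟩ := hAll x
    obtain ⟨B₁, hB₁, hxB₁, hB₁O⟩ := hO x hxO
    obtain ⟨B'', hB'', hxB'', hsB₁, hsB⟩ := hstr x B₁ hB₁ B hB hxB₁ hxB
    have hposet := hOB.isPoset B'' hB''
    have hlax : B''.laxSub B₁ := by
      refine ⟨hsB₁.1, fun p q hpq => ?_⟩
      obtain ⟨hp, hq⟩ := hposet.1 p q hpq
      exact (hsB₁.2 p hp q hq).1 hpq
    refine ⟨B'', basis_mem_openPosets hOB hB'', hxB'',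
      ⟨fun y hy => hB₁O.1 (hlax.1 hy), fun p q hpq => hB₁O.2 p q (hlax.2 p q hpq)⟩, ?_⟩
    exact nachbin_of_agree hsB.1 (fun p hp q hq => hsB.2 p hp q hq) hN
end

section
/- Let X be a locally ordered space, Y a strictly locally ordered space given by a strict ordered basis 𝔅', and f : X → Y a function. Then f is locally increasing at a point x ∈ X if, and only if, f is continuous at x and there exist an open poset O of X and B₀ ∈ 𝔅' such that x ∈ |O|, f(|O|) ⊆ |B₀|, and the restriction f : (|O|, ≤_O) → (|B₀|, ≤_{B₀}) is increasing. -/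
universe u v w v'

/-- For `X` a locally ordered space (basis `𝔅`), `Y` a strictly
locally ordered space (strict basis `𝔅'`) and `f : X → Y`: `f` is locally
increasing at `x` iff `f` is continuous at `x` and there are an open poset `O`
of `X` and `B₀ ∈ 𝔅'` with `x ∈ |O|`, `f(|O|) ⊆ |B₀|` and
`f : (|O|, ≤_O) → (|B₀|, ≤_{B₀})` increasing. -/
theorem stmt3 {X : Type u} {Y : Type v} [TopologicalSpace X] [TopologicalSpace Y]
    (𝔅 : Set (OSet X)) (h𝔅 : IsOrderedBasis 𝔅)
    (𝔅' : Set (OSet Y)) (h𝔅' : IsStrictOrderedBasis 𝔅')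
    (f : X → Y) (x : X) :
    LocIncrAt 𝔅 𝔅' f x ↔
      (ContinuousAt f x ∧
        ∃ O ∈ openPosets 𝔅, ∃ B₀ ∈ 𝔅', x ∈ O.carrier ∧
          (∀ p ∈ O.carrier, f p ∈ B₀.carrier) ∧
          ∀ p q, O.le p q → B₀.le (f p) (f q)) := by
  constructor
  · intro h
    -- there is some B' ∈ 𝔅' containing f x
    have hYopen : ∃ B' ∈ 𝔅', f x ∈ B'.carrier := by
      have : f x ∈ (Set.univ : Set Y) := trivial
      obtain ⟨t, ht, hxt, -⟩ :=
        h𝔅'.1.isBasis.exists_subset_of_mem_open this isOpen_univ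
      obtain ⟨B', hB', rfl⟩ := ht
      exact ⟨B', hB', hxt⟩
    constructor
    · -- continuity at x
      intro V hV
      obtain ⟨t, ht, hxt, htV⟩ := h𝔅'.1.isBasis.mem_nhds_iff.mp hV
      obtain ⟨B', hB', rfl⟩ := ht
      obtain ⟨B, hB, hxB, hmap, -⟩ := h B' hB' hxt
      rw [Filter.mem_map]
      have hBopen : IsOpen B.carrier :=
        h𝔅.isBasis.isOpen ⟨B, hB, rfl⟩
      refine Filter.mem_of_superset (hBopen.mem_nhds hxB) ?_
      intro p hp
      exact htV (hmap p hp)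
    · obtain ⟨B', hB', hxB'⟩ := hYopen
      obtain ⟨B, hB, hxB, hmap, hincr⟩ := h B' hB' hxB'
      refine ⟨B, ?_, B', hB', hxB, hmap, hincr⟩
      intro y hy
      exact ⟨B, hB, hy, subset_rfl, fun p q h => h⟩
  · rintro ⟨hcont, O, hO, B₀, hB₀, hxO, hmap, hincr⟩
    intro B' hB' hxB'
    -- interpolate in the target
    obtain ⟨B'', hB'', hxB'', hs₀, hs'⟩ :=
      h𝔅'.2 (f x) B₀ hB₀ B' hB' (hmap x hxO) hxB'
    -- f⁻¹ |B''| is a neighbourhood of x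
    have hB''open : IsOpen B''.carrier :=
      h𝔅'.1.isBasis.isOpen ⟨B'', hB'', rfl⟩
    have hnhds : f ⁻¹' B''.carrier ∈ nhds x :=
      hcont (hB''open.mem_nhds hxB'')
    obtain ⟨U, hUsub, hUopen, hxU⟩ := mem_nhds_iff.mp hnhds
    -- basis element of X inside |B_O| ∩ U
    obtain ⟨B_O, hBO, hxBO, hlax⟩ := hO x hxO
    have hBOopen : IsOpen B_O.carrier :=
      h𝔅.isBasis.isOpen ⟨B_O, hBO, rfl⟩
    obtain ⟨t, ht, hxt, htsub⟩ :=
      h𝔅.isBasis.exists_subset_of_mem_open (Set.mem_inter hxBO hxU)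
        (hBOopen.inter hUopen)
    obtain ⟨B₁, hB₁, rfl⟩ := ht
    obtain ⟨B, hB, hxB, hBsub, hBle⟩ :=
      h𝔅.compat x B₁ hB₁ B_O hBO hxt (htsub hxt).1
    refine ⟨B, hB, hxB, ?_, ?_⟩
    · intro p hp
      have : p ∈ U := (htsub (hBsub hp).1).2
      exact hs'.1 (hUsub this)
    · intro p q hpq
      have hpq' := (hBle p q hpq).2
      have hOle := hlax.2 p q hpq'
      have hBle₀ := hincr p q hOle
      have hpB : p ∈ B.carrier := ((h𝔅.isPoset B hB).1 p q hpq).1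
      have hqB : q ∈ B.carrier := ((h𝔅.isPoset B hB).1 p q hpq).2
      have hfp : f p ∈ B''.carrier := hUsub (htsub (hBsub hpB).1).2
      have hfq : f q ∈ B''.carrier := hUsub (htsub (hBsub hqB).1).2
      have : B''.le (f p) (f q) := (hs₀.2 (f p) hfp (f q) hfq).mpr hBle₀
      exact (hs'.2 (f p) hfp (f q) hfq).mp this
end

section
/- Let X and Y be locally ordered spaces and f : S⃗¹ × X → Y a locally increasing map, where S⃗¹ × X carries the product locally ordered structure. Then the set K(f) := {t ∈ X : f(s,t) = f(s',t) for all s, s' ∈ S¹} is an open subset of X. -/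
universe u v w v'

/-! ## The directed circle -/

/-- The proper open arc `{e^{ix} : a < x < b}` of the unit circle, with its
standard partial order. -/
def arcOSet (a b : ℝ) : OSet Circle where
  carrier := Circle.exp '' Set.Ioo a b
  le p q := ∃ x ∈ Set.Ioo a b, ∃ y ∈ Set.Ioo a b, x ≤ y ∧ Circle.exp x = p ∧ Circle.exp y = q

/-- The strict ordered basis of the directed circle `S⃗¹`: all proper open arcs
with their standard orders. -/
def dCircleBasis : Set (OSet Circle) :=
  {B | ∃ a b : ℝ, 0 < b - a ∧ b - a < 2 * Real.pi ∧ B = arcOSet a b}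

/-- `K(f) = {t | ∀ s s', f (s,t) = f (s',t)}`. -/
def Kset {X : Type u} {Y : Type v} (f : Circle × X → Y) : Set X :=
  {t | ∀ s s' : Circle, f (s, t) = f (s', t)}


/-- A transitive relation that holds locally along `g : ℝ → α` holds globally. -/
theorem mono_of_local {α : Type w} (r : α → α → Prop)
    (htrans : ∀ a b c, r a b → r b c → r a c) (g : ℝ → α)
    (hloc : ∀ u : ℝ, ∃ ε > 0, ∀ x z : ℝ, |x - u| < ε → |z - u| < ε → x ≤ z → r (g x) (g z)) :
    ∀ u v : ℝ, u ≤ v → r (g u) (g v) := by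
  intro u v huv
  set S : Set ℝ := {w | w ∈ Set.Icc u v ∧ r (g u) (g w)} with hS
  have hru : r (g u) (g u) := by
    obtain ⟨ε, hε, h⟩ := hloc u
    exact h u u (by simpa using hε) (by simpa using hε) le_rfl
  have huS : u ∈ S := ⟨⟨le_rfl, huv⟩, hru⟩
  have hbdd : BddAbove S := ⟨v, fun w hw => hw.1.2⟩
  have hne : S.Nonempty := ⟨u, huS⟩
  set c := sSup S with hc
  have hcu : u ≤ c := le_csSup hbdd huS
  have hcv : c ≤ v := csSup_le hne fun w hw => hw.1.2
  obtain ⟨ε, hε, h⟩ := hloc c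
  obtain ⟨w, hwS, hwc⟩ := exists_lt_of_lt_csSup hne (show c - ε < c by linarith)
  have hwle : w ≤ c := le_csSup hbdd hwS
  set z := min (c + ε / 2) v with hz
  have hcz : c ≤ z := le_min (by linarith) hcv
  have hzc : z ≤ c + ε / 2 := min_le_left _ _
  have hzS : z ∈ S := by
    refine ⟨⟨le_trans hcu hcz, min_le_right _ _⟩, ?_⟩
    have hwz : r (g w) (g z) := h w z (by rw [abs_sub_lt_iff]; constructor <;> linarith)
      (by rw [abs_sub_lt_iff]; constructor <;> linarith) (le_trans hwle hcz)
    exact htrans _ _ _ hwS.2 hwz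
  have hzlec : z ≤ c := le_csSup hbdd hzS
  have hcv' : c = v := by
    by_contra h'
    have h1 : c < v := lt_of_le_of_ne hcv h'
    have h2 : c < z := lt_min (by linarith) h1
    exact absurd hzlec (not_le.mpr h2)
  have hzv : z = v := by
    rw [hz, hcv']
    exact min_eq_right (by linarith)
  rw [← hzv]
  exact hzS.2

/-- For `X`, `Y` locally ordered spaces and
`f : S⃗¹ × X → Y` locally increasing, the set `K(f)` is open in `X`. -/
theorem stmt4 {X : Type u} {Y : Type v} [TopologicalSpace X] [TopologicalSpace Y]
    (𝔅 : Set (OSet X)) (h𝔅 : IsOrderedBasis 𝔅)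
    (𝔅' : Set (OSet Y)) (h𝔅' : IsOrderedBasis 𝔅')
    (f : Circle × X → Y) (hf : LocIncr (prodBasis dCircleBasis 𝔅) 𝔅' f) :
    IsOpen (Kset f) := by
  rw [isOpen_iff_forall_mem_open]
  intro t ht
  -- the common value `y` of `f (·, t)`
  set y : Y := f (1, t) with hy
  -- choose a basic ordered neighborhood `B₀` of `y` in `Y`
  obtain ⟨U, hU, hyU, -⟩ :=
    h𝔅'.isBasis.exists_subset_of_mem_open (Set.mem_univ y) isOpen_univ
  obtain ⟨B₀, hB₀, rfl⟩ := hU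
  -- for each `s`, apply local increasingness of `f` at `(s, t)`
  have key : ∀ s : Circle, ∃ a b : ℝ, ∃ B : OSet X,
      0 < b - a ∧ b - a < 2 * Real.pi ∧ B ∈ 𝔅 ∧
      s ∈ (arcOSet a b).carrier ∧ t ∈ B.carrier ∧
      (∀ p ∈ ((arcOSet a b).prod B).carrier, f p ∈ B₀.carrier) ∧
      (∀ p q, ((arcOSet a b).prod B).le p q → B₀.le (f p) (f q)) := by
    intro s
    have hfy : f (s, t) ∈ B₀.carrier := by
      have := ht s 1
      rw [this]; exact hyU
    obtain ⟨C, hC, hsC, hmap, hmono⟩ := hf (s, t) B₀ hB₀ hfy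
    obtain ⟨A, hA, B, hB, rfl⟩ := hC
    obtain ⟨a, b, hab1, hab2, rfl⟩ := hA
    exact ⟨a, b, B, hab1, hab2, hB, hsC.1, hsC.2, hmap, hmono⟩
  choose a b B hab1 hab2 hB𝔅 hsarc htB hmap hmono using key
  -- compactness of the circle: finite subcover by the arcs
  have hcov : Set.univ ⊆ ⋃ s : Circle, (arcOSet (a s) (b s)).carrier :=
    fun s _ => Set.mem_iUnion.2 ⟨s, hsarc s⟩
  have hopen : ∀ s : Circle, IsOpen (arcOSet (a s) (b s)).carrier :=
    fun s => isLocalHomeomorph_circleExp.isOpenMap _ isOpen_Ioo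
  obtain ⟨I, hI⟩ := isCompact_univ.elim_finite_subcover
    (fun s : Circle => (arcOSet (a s) (b s)).carrier) hopen hcov
  refine ⟨⋂ s ∈ I, (B s).carrier, ?_, ?_, ?_⟩
  · -- the neighborhood is contained in `Kset f`
    intro t' ht'
    have ht'B : ∀ s ∈ I, t' ∈ (B s).carrier := by
      intro s hs
      exact Set.mem_iInter.1 (Set.mem_iInter.1 ht' s) hs
    set g : ℝ → Y := fun x => f (Circle.exp x, t') with hg
    -- local monotonicity of `g` with respect to `B₀.le`
    have hloc : ∀ u : ℝ, ∃ ε > 0, ∀ x z : ℝ, |x - u| < ε → |z - u| < ε → x ≤ z →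
        B₀.le (g x) (g z) := by
      intro u
      have : Circle.exp u ∈ ⋃ s ∈ I, (arcOSet (a s) (b s)).carrier := hI (Set.mem_univ _)
      obtain ⟨s, hsI, hmem⟩ := Set.mem_iUnion₂.1 this
      obtain ⟨w, hw, hwexp⟩ := hmem
      refine ⟨min (w - a s) (b s - w), lt_min (by linarith [hw.1]) (by linarith [hw.2]), ?_⟩
      intro x z hx hz hxz
      have hx1 : |x - u| < w - a s := lt_of_lt_of_le hx (min_le_left _ _)
      have hx2 : |x - u| < b s - w := lt_of_lt_of_le hx (min_le_right _ _)
      have hz1 : |z - u| < w - a s := lt_of_lt_of_le hz (min_le_left _ _)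
      have hz2 : |z - u| < b s - w := lt_of_lt_of_le hz (min_le_right _ _)
      rw [abs_sub_lt_iff] at hx1 hx2 hz1 hz2
      have hxm : w + (x - u) ∈ Set.Ioo (a s) (b s) := ⟨by linarith, by linarith⟩
      have hzm : w + (z - u) ∈ Set.Ioo (a s) (b s) := ⟨by linarith, by linarith⟩
      have hexpx : Circle.exp (w + (x - u)) = Circle.exp x := by
        rw [Circle.exp_add, hwexp, ← Circle.exp_add]
        ring_nf
      have hexpz : Circle.exp (w + (z - u)) = Circle.exp z := by
        rw [Circle.exp_add, hwexp, ← Circle.exp_add]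
        ring_nf
      have harc : (arcOSet (a s) (b s)).le (Circle.exp x) (Circle.exp z) :=
        ⟨w + (x - u), hxm, w + (z - u), hzm, by linarith, hexpx, hexpz⟩
      have hrefl : (B s).le t' t' :=
        ((h𝔅.isPoset (B s) (hB𝔅 s)).2.1) t' (ht'B s hsI)
      exact hmono s (Circle.exp x, t') (Circle.exp z, t') ⟨harc, hrefl⟩
    -- globalize using transitivity of `B₀.le`
    have htrans : ∀ p q r, B₀.le p q → B₀.le q r → B₀.le p r :=
      (h𝔅'.isPoset B₀ hB₀).2.2.2
    have hglob : ∀ u v : ℝ, u ≤ v → B₀.le (g u) (g v) :=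
      mono_of_local B₀.le htrans g hloc
    -- periodicity of `g`
    have hper : ∀ x : ℝ, g (x + 2 * Real.pi) = g x := by
      intro x
      simp only [hg]
      rw [Circle.exp_add_two_pi]
    -- any two values of `g` are `≤`, hence equal by antisymmetry
    have hall : ∀ u v : ℝ, B₀.le (g u) (g v) := by
      have haux : ∀ u v : ℝ, u ≤ v → B₀.le (g v) (g u) := by
        intro u v huv
        obtain ⟨n, hn⟩ := Archimedean.arch (v - u) (show (0:ℝ) < 2 * Real.pi by positivity)
        have hn' : v ≤ u + n • (2 * Real.pi) := by
          have := hn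
          simp only [nsmul_eq_mul] at this ⊢
          linarith [sub_le_iff_le_add'.1 this]
        have hgu : ∀ m : ℕ, g (u + m • (2 * Real.pi)) = g u := by
          intro m
          induction m with
          | zero => rw [zero_smul, add_zero]
          | succ k ih =>
            have heq : u + (k + 1) • (2 * Real.pi) = (u + k • (2 * Real.pi)) + 2 * Real.pi := by
              simp only [nsmul_eq_mul]; push_cast; ring
            rw [heq, hper, ih]
        have hres := hglob v _ hn'
        rw [hgu n] at hres
        exact hres
      intro u v
      rcases le_total u v with h' | h'
      · exact hglob u v h'
      · exact haux v u h'
    have hanti : ∀ p q, B₀.le p q → B₀.le q p → p = q :=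
      (h𝔅'.isPoset B₀ hB₀).2.2.1
    intro s s'
    have h1 : f (s, t') = g (Complex.arg (s : ℂ)) := by
      simp only [hg, Circle.exp_arg]
    have h2 : f (s', t') = g (Complex.arg ((s' : Circle) : ℂ)) := by
      simp only [hg, Circle.exp_arg]
    rw [h1, h2]
    exact hanti _ _ (hall _ _) (hall _ _)
  · exact isOpen_biInter_finset fun s _ =>
      h𝔅.isBasis.isOpen ⟨B s, hB𝔅 s, rfl⟩
  · exact Set.mem_iInter₂.2 fun s _ => htB s
end

section
/- Let X be a locally ordered space, ∗ ∈ X, and O an open neighbourhood of ∗. The map q_O : S⃗¹ × X → X_O is locally increasing, where S⃗¹ × X carries the product locally ordered structure and X_O the final topology of q_O with the ordered basis of the posets (U_{α,A}, ≤_{α,A}). -/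
universe u v w v'

/-! ## The space `X_O` -/

/-- The underlying set of `X_O := O ⊔ (S¹ × (X ∖ O))`. -/
def XO (X : Type u) (O : Set X) : Type u := ↥O ⊕ (Circle × ↥(Oᶜ))

open Classical in
/-- The map `q_O : S¹ × X → X_O`. -/
noncomputable def qO {X : Type u} (O : Set X) : Circle × X → XO X O := fun p =>
  if h : p.2 ∈ O then Sum.inl ⟨p.2, h⟩ else Sum.inr (p.1, ⟨p.2, h⟩)

/-- `X_O` carries the final topology of `q_O`. -/
noncomputable instance XO.topology {X : Type u} [TopologicalSpace X] (O : Set X) :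
    TopologicalSpace (XO X O) :=
  TopologicalSpace.coinduced (qO O) inferInstance

/-- The subset `U_{α,A}` of `X_O` (for `αc` a set of points of the circle and
`A` a subset of `X`). -/
def USet {X : Type u} (O : Set X) (αc : Set Circle) (A : Set X) : Set (XO X O) :=
  Sum.inl '' {t : ↥O | (t : X) ∈ A} ∪
    Sum.inr '' {p : Circle × ↥(Oᶜ) | p.1 ∈ αc ∧ (p.2 : X) ∈ A}

/-- The second component of an element of `X_O`. -/
def XO.p2 {X : Type u} {O : Set X} : XO X O → X :=
  Sum.elim (fun t => (t : X)) (fun p => (p.2 : X))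

/-- The relation `≤¹_{α,A}` on `X_O`: the image under `q_O` of the product order
on `α × A`. -/
def leOne {X : Type u} (O : Set X) (α : OSet Circle) (A : OSet X) (u u' : XO X O) : Prop :=
  ∃ x x' : Circle × X, α.le x.1 x'.1 ∧ A.le x.2 x'.2 ∧ qO O x = u ∧ qO O x' = u'

/-- The relation `⊑` on `X_O`. -/
def sqsub {X : Type u} (O : Set X) (α : OSet Circle) (A : OSet X) (u u' : XO X O) : Prop :=
  A.le (XO.p2 u) (XO.p2 u') ∧
    ((∃ t : ↥O, u = Sum.inl t) ∨ (∃ t : ↥O, u' = Sum.inl t) ∨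
      ∃ (s s' : Circle) (t t' : ↥(Oᶜ)),
        u = Sum.inr (s, t) ∧ u' = Sum.inr (s', t') ∧ α.le s s')

/-- The poset `(U_{α,A}, ≤_{α,A})`, where `≤_{α,A}` is the transitive closure of
`≤¹_{α,A}`. -/
def UOSet {X : Type u} (O : Set X) (α : OSet Circle) (A : OSet X) : OSet (XO X O) where
  carrier := USet O α.carrier A.carrier
  le := Relation.TransGen (leOne O α A)

/-- The ordered basis of `X_O`: the posets `(U_{α,A}, ≤_{α,A})` for `α` a proper
open arc and `A` an open poset of `X`. -/
def XOBasis {X : Type u} (𝔅 : Set (OSet X)) (O : Set X) : Set (OSet (XO X O)) :=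
  {C | ∃ a b : ℝ, 0 < b - a ∧ b - a < 2 * Real.pi ∧
    ∃ A ∈ openPosets 𝔅, C = UOSet O (arcOSet a b) A}

/-- The map `q_O : S⃗¹ × X → X_O` is locally increasing. -/
theorem stmt8 {X : Type u} [TopologicalSpace X] (𝔅 : Set (OSet X))
    (h𝔅 : IsOrderedBasis 𝔅) (star : X) (O : Set X) (hO : IsOpen O) (hstar : star ∈ O) :
    LocIncr (prodBasis dCircleBasis 𝔅) (XOBasis 𝔅 O) (qO O) := by
  rintro ⟨s, t⟩ C hC hmem
  obtain ⟨a, b, hab, hab2, A, hA, rfl⟩ := hC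
  by_cases ht : t ∈ O
  · -- `t ∈ O`: image lands in the `inl` part
    have hq : qO O (s, t) = Sum.inl ⟨t, ht⟩ := by simp [qO, ht]; rfl
    have htA : t ∈ A.carrier := by
      rw [hq] at hmem
      rcases hmem with ⟨⟨t', ht'⟩, h1, h2⟩ | ⟨p, _, h2⟩
      · cases h2; exact h1
      · exact absurd h2 (by simp)
    obtain ⟨BA, hBA𝔅, htBA, hBAlax⟩ := hA t htA
    have hBAopen : IsOpen BA.carrier := h𝔅.isBasis.isOpen ⟨BA, hBA𝔅, rfl⟩
    obtain ⟨V, ⟨B₂, hB₂𝔅, rfl⟩, htB₂, hB₂sub⟩ :=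
      h𝔅.isBasis.exists_subset_of_mem_open (Set.mem_inter ht htBA) (hO.inter hBAopen)
    obtain ⟨B'', hB''𝔅, htB'', hB''sub, hB''le⟩ :=
      h𝔅.compat t B₂ hB₂𝔅 BA hBA𝔅 htB₂ htBA
    have hB''O : B''.carrier ⊆ O := fun p hp => ((hB₂sub (hB''sub hp).1)).1
    have hB''A : B''.carrier ⊆ A.carrier := fun p hp => hBAlax.1 (hB''sub hp).2
    have hB''poset := h𝔅.isPoset B'' hB''𝔅
    -- the distinguished point of the arc α
    set σ : Circle := Circle.exp ((a + b) / 2) with hσ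
    have hmid : (a + b) / 2 ∈ Set.Ioo a b := by constructor <;> linarith
    have hσσ : (arcOSet a b).le σ σ :=
      ⟨(a + b) / 2, hmid, (a + b) / 2, hmid, le_refl _, rfl, rfl⟩
    -- a small arc around s
    set θ : ℝ := Complex.arg s with hθ
    have hsθ : Circle.exp θ = s := Circle.exp_arg s
    refine ⟨(arcOSet (θ - 1) (θ + 1)).prod B'', ?_, ?_, ?_, ?_⟩
    · exact ⟨arcOSet (θ - 1) (θ + 1),
        ⟨θ - 1, θ + 1, by norm_num, by nlinarith [Real.pi_gt_three], rfl⟩, B'', hB''𝔅, rfl⟩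
    · exact ⟨⟨θ, ⟨by linarith, by linarith⟩, hsθ⟩, htB''⟩
    · rintro ⟨s₁, t₁⟩ ⟨-, ht₁⟩
      have ht₁O : t₁ ∈ O := hB''O ht₁
      have : qO O (s₁, t₁) = Sum.inl ⟨t₁, ht₁O⟩ := by simp [qO, ht₁O]; rfl
      rw [this]
      exact Or.inl ⟨⟨t₁, ht₁O⟩, hB''A ht₁, rfl⟩
    · rintro ⟨s₁, t₁⟩ ⟨s₂, t₂⟩ ⟨-, hle⟩
      have ht₁ : t₁ ∈ B''.carrier := (hB''poset.1 _ _ hle).1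
      have ht₂ : t₂ ∈ B''.carrier := (hB''poset.1 _ _ hle).2
      have hAle : A.le t₁ t₂ := hBAlax.2 _ _ (hB''le _ _ hle).2
      refine Relation.TransGen.single ⟨(σ, t₁), (σ, t₂), hσσ, hAle, ?_, ?_⟩ <;>
        (simp [qO, hB''O ht₁, hB''O ht₂]; rfl)
  · -- `t ∉ O`
    have hq : qO O (s, t) = Sum.inr (s, ⟨t, ht⟩) := by simp [qO, ht]; rfl
    have hst : s ∈ (arcOSet a b).carrier ∧ t ∈ A.carrier := by
      rw [hq] at hmem
      rcases hmem with ⟨p, _, h2⟩ | ⟨p, h1, h2⟩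
      · exact absurd h2 (by simp)
      · cases h2; exact h1
    obtain ⟨BA, hBA𝔅, htBA, hBAlax⟩ := hA t hst.2
    have hBAposet := h𝔅.isPoset BA hBA𝔅
    refine ⟨(arcOSet a b).prod BA, ⟨arcOSet a b, ⟨a, b, hab, hab2, rfl⟩, BA, hBA𝔅, rfl⟩,
      ⟨hst.1, htBA⟩, ?_, ?_⟩
    · rintro ⟨s₁, t₁⟩ ⟨hs₁, ht₁⟩
      have ht₁A : t₁ ∈ A.carrier := hBAlax.1 ht₁
      by_cases h₁ : t₁ ∈ O
      · have : qO O (s₁, t₁) = Sum.inl ⟨t₁, h₁⟩ := by simp [qO, h₁]; rfl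
        rw [this]; exact Or.inl ⟨⟨t₁, h₁⟩, ht₁A, rfl⟩
      · have : qO O (s₁, t₁) = Sum.inr (s₁, ⟨t₁, h₁⟩) := by simp [qO, h₁]; rfl
        rw [this]; exact Or.inr ⟨(s₁, ⟨t₁, h₁⟩), ⟨hs₁, ht₁A⟩, rfl⟩
    · rintro ⟨s₁, t₁⟩ ⟨s₂, t₂⟩ ⟨hles, hle⟩
      exact Relation.TransGen.single
        ⟨(s₁, t₁), (s₂, t₂), hles, hBAlax.2 _ _ hle, rfl, rfl⟩
end

section
/- Let X be a locally ordered space, ∗ ∈ X, O an open neighbourhood of ∗, and Y a locally ordered space. Any locally increasing map f : S⃗¹ × X → Y such that O ⊆ K(f) factorizes through q_O : S⃗¹ × X → X_O in a unique way: there is a unique locally increasing map h : X_O → Y with f = h ∘ q_O. -/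
universe u v w v'

/-- The factorization of `f` through `q_O`. -/
noncomputable def factorMap {X : Type u} {Y : Type v} (f : Circle × X → Y) (O : Set X) : XO X O → Y :=
  Sum.elim (fun t => f (1, (t : X))) (fun p => f (p.1, (p.2 : X)))

theorem factorMap_qO {X : Type u} {Y : Type v} (f : Circle × X → Y) (O : Set X)
    (hK : O ⊆ Kset f) (x : Circle × X) : factorMap f O (qO O x) = f x := by
  obtain ⟨s, t⟩ := x
  by_cases ht : t ∈ O
  · rw [show qO O (s, t) = Sum.inl ⟨t, ht⟩ by simp [qO, ht]; rfl]
    simp only [qO, dif_pos ht, factorMap, Sum.elim_inl]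
    exact hK ht 1 s
  · rw [show qO O (s, t) = Sum.inr (s, ⟨t, ht⟩) by simp [qO, ht]; rfl]
    simp only [qO, dif_neg ht, factorMap, Sum.elim_inr]

theorem qO_surjective {X : Type u} (O : Set X) : Function.Surjective (qO O) := by
  intro u
  cases u with
  | inl t => exact ⟨(1, t.1), by simp [qO, t.2]; rfl⟩
  | inr p => exact ⟨(p.1, p.2.1), by simp [qO, Set.notMem_of_mem_compl p.2.2]; rfl⟩

/-- Any locally increasing `f : S⃗¹ × X → Y` with `O ⊆ K(f)`
factorizes through `q_O` in a unique way (by a locally increasing map). -/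
theorem stmt9 {X : Type u} {Y : Type v} [TopologicalSpace X] [TopologicalSpace Y]
    (𝔅 : Set (OSet X)) (h𝔅 : IsOrderedBasis 𝔅)
    (𝔅' : Set (OSet Y)) (h𝔅' : IsOrderedBasis 𝔅')
    (star : X) (O : Set X) (hO : IsOpen O) (hstar : star ∈ O)
    (f : Circle × X → Y) (hf : LocIncr (prodBasis dCircleBasis 𝔅) 𝔅' f)
    (hK : O ⊆ Kset f) :
    ∃! h : XO X O → Y, LocIncr (XOBasis 𝔅 O) 𝔅' h ∧ f = h ∘ qO O := by
  classical
  refine ⟨factorMap f O, ⟨?_, ?_⟩, ?_⟩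
  · -- locally increasing
    intro u B' hB' huB'
    obtain ⟨x, hqx⟩ := qO_surjective O u
    have hfx : f x ∈ B'.carrier := by
      rw [← factorMap_qO f O hK x, hqx]; exact huB'
    obtain ⟨B, hBmem, hxB, hmapB, hmono⟩ := hf x B' hB' hfx
    obtain ⟨α, hα, A, hA, rfl⟩ := hBmem
    obtain ⟨a, b, hab1, hab2, rfl⟩ := hα
    have hx1 : x.1 ∈ (arcOSet a b).carrier := hxB.1
    have hx2 : x.2 ∈ A.carrier := hxB.2
    refine ⟨UOSet O (arcOSet a b) A, ⟨a, b, hab1, hab2, A,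
      fun y hy => ⟨A, hA, hy, subset_rfl, fun _ _ h => h⟩, rfl⟩, ?_, ?_, ?_⟩
    · -- u belongs to the carrier
      rw [← hqx]
      by_cases h2 : x.2 ∈ O
      · exact Or.inl ⟨⟨x.2, h2⟩, hx2, by simp [qO, h2]; rfl⟩
      · exact Or.inr ⟨(x.1, ⟨x.2, h2⟩), ⟨hx1, hx2⟩, by simp [qO, h2]; rfl⟩
    · -- maps into B'.carrier
      rintro p (⟨t, htA, rfl⟩ | ⟨z, ⟨hz1, hz2⟩, rfl⟩)
      · show f (1, (t : X)) ∈ B'.carrier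
        rw [hK t.2 1 x.1]
        exact hmapB (x.1, (t : X)) ⟨hx1, htA⟩
      · exact hmapB (z.1, (z.2 : X)) ⟨hz1, hz2⟩
    · -- increasing
      intro p q hpq
      have htrans := (h𝔅'.isPoset B' hB').2.2.2
      have step : ∀ p q, leOne O (arcOSet a b) A p q →
          B'.le (factorMap f O p) (factorMap f O q) := by
        rintro p q ⟨z, z', hz1, hz2, rfl, rfl⟩
        rw [factorMap_qO f O hK z, factorMap_qO f O hK z']
        exact hmono z z' ⟨hz1, hz2⟩
      induction hpq with
      | single h => exact step _ _ h
      | tail _ h ih => exact htrans _ _ _ ih (step _ _ h)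
  · -- factorization
    funext x
    exact (factorMap_qO f O hK x).symm
  · -- uniqueness
    rintro h' ⟨_, hfact⟩
    funext u
    obtain ⟨x, hqx⟩ := qO_surjective O u
    rw [← hqx, ← Function.comp_apply (f := h'), ← hfact, factorMap_qO f O hK x]
end

section
/- Let X be a locally ordered space and ∗ ∈ X. In the category of locally ordered spaces and locally increasing maps, the pair of maps i_∗, c_∗ : S¹ → S⃗¹ × X (where i_∗(s) = (s,∗) and c_∗(s) = (1,∗)) has a coequalizer if, and only if, the family of open neighbourhoods of ∗ in X has a smallest element; and if O is this smallest open neighbourhood, then q_O : S⃗¹ × X → X_O is the coequalizer. -/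
universe u v w v'

/-! ## The category of locally ordered spaces -/

/-- A bundled locally ordered space (an object of the category `LPO`). -/
structure LocOrdSpace : Type (u + 1) where
  carrier : Type u
  top : TopologicalSpace carrier
  basis : Set (OSet carrier)
  isBasis : @IsOrderedBasis carrier top basis

/-- `g : B → C` is the coequalizer of `i, j : A → B` in the full subcategory of
locally ordered spaces (at universe `u`) whose objects satisfy `P`: `g` is locally
increasing, coequalizes `i` and `j`, and every locally increasing map
`f : B → Y` (for `Y` an object satisfying `P`) with `f ∘ i = f ∘ j` factors
through `g` by a unique locally increasing map. -/
def IsCoeqIn (P : LocOrdSpace.{u} → Prop) {A : Type w} {B : Type v} {C : Type v'}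
    (𝔅 : Set (OSet B)) (ℭ : Set (OSet C)) (i j : A → B) (g : B → C) : Prop :=
  LocIncr 𝔅 ℭ g ∧ g ∘ i = g ∘ j ∧
    ∀ Y : LocOrdSpace.{u}, P Y → ∀ f : B → Y.carrier,
      LocIncr 𝔅 Y.basis f → f ∘ i = f ∘ j →
        ∃! h : C → Y.carrier, LocIncr ℭ Y.basis h ∧ f = h ∘ g

/-! ### Auxiliary lemmas -/

section Aux

open Set

local notation "π" => Real.pi

/-- `Circle.exp` is an open map. -/
lemma isOpenMap_circleExp : IsOpenMap Circle.exp := by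
  have h : (Circle.exp : ℝ → Circle) =
      (AddCircle.homeomorphCircle' : AddCircle (2 * π) → Circle) ∘ (QuotientAddGroup.mk) := by
    funext x
    exact (AddCircle.homeomorphCircle'_apply_mk x).symm
  rw [h]
  exact (AddCircle.homeomorphCircle'.isOpenMap).comp QuotientAddGroup.isOpenMap_coe

lemma circleExp_injOn {a b : ℝ} (hlt : b - a < 2 * π) {x y : ℝ}
    (hx : x ∈ Ioo a b) (hy : y ∈ Ioo a b) (hxy : Circle.exp x = Circle.exp y) : x = y := by
  obtain ⟨m, hm⟩ := Circle.exp_eq_exp.1 hxy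
  have h1 : |x - y| < 2 * π := by
    rw [abs_sub_lt_iff]
    constructor <;> nlinarith [hx.1, hx.2, hy.1, hy.2]
  have h2 : x - y = (m : ℝ) * (2 * π) := by linarith [hm]
  have h3 : |(m : ℝ)| * (2 * π) < 2 * π := by
    calc |(m : ℝ)| * (2 * π) = |(m : ℝ)| * |2 * π| := by
            rw [abs_of_nonneg (by positivity : (0:ℝ) ≤ 2 * π)]
      _ = |x - y| := by rw [← abs_mul, ← h2]
      _ < 2 * π := h1
  have h4 : |(m : ℝ)| < 1 := by
    have h5 : (0:ℝ) < 2 * π := by positivity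
    nlinarith
  have hm0 : m = 0 := by
    have h5 := (abs_lt).1 h4
    have h6 : (-1:ℤ) < m := by exact_mod_cast h5.1
    have h7 : (m:ℤ) < 1 := by exact_mod_cast h5.2
    omega
  rw [hm0] at hm; simpa using hm

lemma circleExp_add_int_mul (y : ℝ) (m : ℤ) :
    Circle.exp (y + (m : ℝ) * (2 * π)) = Circle.exp y :=
  Circle.exp_eq_exp.2 ⟨m, rfl⟩

lemma arc_refl {a b : ℝ} {s : Circle} (hs : s ∈ (arcOSet a b).carrier) :
    (arcOSet a b).le s s := by
  obtain ⟨x, hx, rfl⟩ := hs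
  exact ⟨x, hx, x, hx, le_refl x, rfl, rfl⟩

lemma arc_le_mem {a b : ℝ} {p q : Circle} (h : (arcOSet a b).le p q) :
    p ∈ (arcOSet a b).carrier ∧ q ∈ (arcOSet a b).carrier := by
  obtain ⟨x, hx, y, hy, _, rfl, rfl⟩ := h
  exact ⟨⟨x, hx, rfl⟩, ⟨y, hy, rfl⟩⟩

lemma arc_isPoset {a b : ℝ} (h2 : b - a < 2 * π) : (arcOSet a b).IsPoset := by
  refine ⟨fun p q h => arc_le_mem h, fun p hp => arc_refl hp, ?_, ?_⟩
  · rintro p q ⟨x, hx, y, hy, hxy, rfl, rfl⟩ ⟨x', hx', y', hy', hxy', hei, hei'⟩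
    have h1 : y = x' := circleExp_injOn h2 hy hx' hei.symm
    have h2' : y' = x := circleExp_injOn h2 hy' hx hei'
    have : x = y := le_antisymm hxy (by rw [h1, ← h2']; exact hxy')
    rw [this]
  · rintro p q r ⟨x, hx, y, hy, hxy, rfl, rfl⟩ ⟨x', hx', y', hy', hxy', hei, rfl⟩
    have h1 : x' = y := circleExp_injOn h2 hx' hy hei
    exact ⟨x, hx, y', hy', by rw [h1] at hxy'; exact le_trans hxy hxy', rfl, rfl⟩

lemma arc_nonempty {a b : ℝ} (h1 : 0 < b - a) :
    ∃ s : Circle, s ∈ (arcOSet a b).carrier ∧ (arcOSet a b).le s s := by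
  refine ⟨Circle.exp ((a + b) / 2), ⟨(a + b) / 2, ⟨by linarith, by linarith⟩, rfl⟩, ?_⟩
  exact arc_refl ⟨(a + b) / 2, ⟨by linarith, by linarith⟩, rfl⟩

lemma arc_carrier_isOpen {a b : ℝ} : IsOpen (arcOSet a b).carrier :=
  isOpenMap_circleExp _ isOpen_Ioo

lemma arc_mem_dCircleBasis {a b : ℝ} (h1 : 0 < b - a) (h2 : b - a < 2 * π) :
    arcOSet a b ∈ dCircleBasis := ⟨a, b, h1, h2, rfl⟩

/-- Proper open arcs form a neighbourhood basis of the circle. -/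
lemma exists_arc_nhd {W : Set Circle} (hW : IsOpen W) {s : Circle} (hs : s ∈ W) :
    ∃ a b : ℝ, 0 < b - a ∧ b - a < 2 * π ∧ s ∈ (arcOSet a b).carrier ∧
      (arcOSet a b).carrier ⊆ W := by
  set x := Complex.arg (s : ℂ) with hx
  have hsx : Circle.exp x = s := Circle.exp_arg s
  have hpre : IsOpen (Circle.exp ⁻¹' W) := hW.preimage Circle.exp.continuous
  have hxpre : x ∈ Circle.exp ⁻¹' W := by simp [Set.mem_preimage, hsx, hs]
  obtain ⟨ε, hε, hball⟩ := Metric.isOpen_iff.1 hpre x hxpre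
  set δ := min (ε / 2) 1 with hδ
  have hδ0 : 0 < δ := by positivity
  refine ⟨x - δ, x + δ, by linarith, ?_, ⟨x, ⟨by linarith, by linarith⟩, hsx⟩, ?_⟩
  · have : δ ≤ 1 := min_le_right _ _
    have := Real.pi_gt_three
    linarith
  · rintro _ ⟨y, hy, rfl⟩
    have : y ∈ Metric.ball x ε := by
      rw [Real.ball_eq_Ioo]
      constructor
      · have : x - ε < x - δ := by
          have : δ ≤ ε / 2 := min_le_left _ _
          linarith
        linarith [hy.1]
      · have : x + δ < x + ε := by
          have : δ ≤ ε / 2 := min_le_left _ _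
          linarith
        linarith [hy.2]
    exact hball this

/-- Shrink two arcs at a common point. -/
lemma arc_shrink {a b a' b' : ℝ} (h2 : b - a < 2 * π) (h2' : b' - a' < 2 * π) {s : Circle}
    (hs : s ∈ (arcOSet a b).carrier) (hs' : s ∈ (arcOSet a' b').carrier) :
    ∃ c d : ℝ, 0 < d - c ∧ d - c < 2 * π ∧ s ∈ (arcOSet c d).carrier ∧
      (arcOSet c d).carrier ⊆ (arcOSet a b).carrier ∩ (arcOSet a' b').carrier ∧
      ∀ p q, (arcOSet c d).le p q → (arcOSet a b).le p q ∧ (arcOSet a' b').le p q := by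
  obtain ⟨x, hx, rfl⟩ := hs
  obtain ⟨x', hx', he⟩ := hs'
  obtain ⟨m, hm⟩ := Circle.exp_eq_exp.1 he
  set k := (m : ℝ) * (2 * π) with hk
  have hxk : x' = x + k := hm
  have hmem : ∀ y : ℝ, y ∈ Set.Ioo (max a (a' - k)) (min b (b' - k)) →
      y ∈ Set.Ioo a b ∧ y + k ∈ Set.Ioo a' b' := by
    rintro y ⟨hy1, hy2⟩
    rw [max_lt_iff] at hy1
    rw [lt_min_iff] at hy2
    exact ⟨⟨hy1.1, hy2.1⟩, ⟨by linarith [hy1.2], by linarith [hy2.2]⟩⟩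
  have hexpk : ∀ y : ℝ, Circle.exp (y + k) = Circle.exp y := fun y => circleExp_add_int_mul y m
  have hxin : x ∈ Set.Ioo (max a (a' - k)) (min b (b' - k)) := by
    constructor
    · rw [max_lt_iff]
      exact ⟨hx.1, by linarith [hx'.1, hxk]⟩
    · rw [lt_min_iff]
      exact ⟨hx.2, by linarith [hx'.2, hxk]⟩
  refine ⟨max a (a' - k), min b (b' - k), by linarith [hxin.1, hxin.2], ?_,
    ⟨x, hxin, rfl⟩, ?_, ?_⟩
  · have h1 : a ≤ max a (a' - k) := le_max_left _ _
    have h2'' : min b (b' - k) ≤ b := min_le_left _ _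
    linarith
  · rintro _ ⟨y, hy, rfl⟩
    obtain ⟨hy1, hy2⟩ := hmem y hy
    exact ⟨⟨y, hy1, rfl⟩, ⟨y + k, hy2, hexpk y⟩⟩
  · rintro p q ⟨y, hy, z, hz, hyz, rfl, rfl⟩
    obtain ⟨hy1, hy2⟩ := hmem y hy
    obtain ⟨hz1, hz2⟩ := hmem z hz
    exact ⟨⟨y, hy1, z, hz1, hyz, rfl, rfl⟩,
      ⟨y + k, hy2, z + k, hz2, by linarith, hexpk y, hexpk z⟩⟩

lemma exists_exp_Icc (s : Circle) : ∃ y : ℝ, 0 ≤ y ∧ y ≤ 2 * π ∧ Circle.exp y = s := by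
  have h1 := Complex.neg_pi_lt_arg (s : ℂ)
  have h2 := Complex.arg_le_pi (s : ℂ)
  have hpi := Real.pi_pos
  rcases le_or_gt 0 (Complex.arg (s : ℂ)) with h | h
  · exact ⟨Complex.arg (s : ℂ), h, by linarith, Circle.exp_arg s⟩
  · refine ⟨Complex.arg (s : ℂ) + 2 * π, by linarith, by linarith, ?_⟩
    rw [Circle.exp_add_two_pi]
    exact Circle.exp_arg s

lemma exists_arc_mem (s : Circle) :
    ∃ a b : ℝ, 0 < b - a ∧ b - a < 2 * π ∧ s ∈ (arcOSet a b).carrier :=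
  let ⟨a, b, h1, h2, hs, _⟩ := exists_arc_nhd isOpen_univ (Set.mem_univ s)
  ⟨a, b, h1, h2, hs⟩

variable {X : Type u}

section BasisFacts

variable [TopologicalSpace X] {𝔅 : Set (OSet X)}

lemma basis_carrier_isOpen (h𝔅 : IsOrderedBasis 𝔅) {A : OSet X} (hA : A ∈ 𝔅) :
    IsOpen A.carrier :=
  h𝔅.isBasis.isOpen ⟨A, hA, rfl⟩

lemma basis_shrink (h𝔅 : IsOrderedBasis 𝔅) {U : Set X} (hU : IsOpen U) {t : X} (ht : t ∈ U) :
    ∃ A ∈ 𝔅, t ∈ A.carrier ∧ A.carrier ⊆ U := by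
  obtain ⟨v, ⟨A, hA, rfl⟩, htv, hvU⟩ := h𝔅.isBasis.exists_subset_of_mem_open ht hU
  exact ⟨A, hA, htv, hvU⟩

end BasisFacts

lemma mem_openPosets_of_mem {𝔅 : Set (OSet X)} {A : OSet X} (hA : A ∈ 𝔅) :
    A ∈ openPosets 𝔅 :=
  fun _ hx => ⟨A, hA, hx, ⟨Set.Subset.refl _, fun _ _ h => h⟩⟩

section XOFacts

variable {O : Set X}

lemma qO_mem {t : X} (h : t ∈ O) (s : Circle) : qO O (s, t) = Sum.inl ⟨t, h⟩ := dif_pos h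

lemma qO_not_mem {t : X} (h : t ∉ O) (s : Circle) : qO O (s, t) = Sum.inr (s, ⟨t, h⟩) :=
  dif_neg h

lemma qO_surjective_s10 : Function.Surjective (qO O) := by
  rintro (⟨t, ht⟩ | ⟨s, t, ht⟩)
  · exact ⟨((1 : Circle), t), qO_mem ht 1⟩
  · exact ⟨(s, t), qO_not_mem ht s⟩

lemma p2_qO (s : Circle) (t : X) : XO.p2 (qO O (s, t)) = t := by
  by_cases h : t ∈ O
  · rw [qO_mem h]; rfl
  · rw [qO_not_mem h]; rfl

lemma qO_eq_inr {x : Circle × X} {s : Circle} {t : ↥(Oᶜ)}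
    (h : qO O x = Sum.inr (s, t)) : x = (s, (t : X)) := by
  by_cases hx : x.2 ∈ O
  · rw [show x = (x.1, x.2) from rfl, qO_mem hx] at h; exact absurd h (by simp)
  · rw [show x = (x.1, x.2) from rfl, qO_not_mem hx] at h
    obtain ⟨h1, h2⟩ := Prod.mk.injEq .. ▸ (Sum.inr.injEq .. ▸ h)
    exact Prod.ext h1 (by rw [← h2])

lemma mem_USet_inl {αc : Set Circle} {A : Set X} {t : ↥O} :
    (Sum.inl t : XO X O) ∈ USet O αc A ↔ (t : X) ∈ A := by
  constructor
  · rintro (⟨t', ht', he⟩ | ⟨p, hp, he⟩)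
    · cases he; exact ht'
    · cases he
  · intro h; exact Or.inl ⟨t, h, rfl⟩

lemma mem_USet_inr {αc : Set Circle} {A : Set X} {s : Circle} {t : ↥(Oᶜ)} :
    (Sum.inr (s, t) : XO X O) ∈ USet O αc A ↔ s ∈ αc ∧ (t : X) ∈ A := by
  constructor
  · rintro (⟨t', ht', he⟩ | ⟨p, hp, he⟩)
    · cases he
    · cases he; exact hp
  · intro h; exact Or.inr ⟨(s, t), h, rfl⟩

lemma qO_mem_USet {αc : Set Circle} {A : Set X} {s : Circle} {t : X} :
    qO O (s, t) ∈ USet O αc A ↔ (t ∈ O ∧ t ∈ A) ∨ (t ∉ O ∧ s ∈ αc ∧ t ∈ A) := by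
  by_cases h : t ∈ O
  · rw [qO_mem h]; exact mem_USet_inl.trans (by simp [h])
  · rw [qO_not_mem h]; exact mem_USet_inr.trans (by simp [h])

lemma isOpen_USet [TopologicalSpace X] (hO : IsOpen O) {αc : Set Circle} {A : Set X}
    (hαc : IsOpen αc) (hA : IsOpen A) : IsOpen (USet O αc A) := by
  have hpre : qO O ⁻¹' (USet O αc A) = (Set.univ ×ˢ (O ∩ A)) ∪ (αc ×ˢ A) := by
    ext ⟨s, t⟩
    rw [Set.mem_preimage, qO_mem_USet]
    by_cases h : t ∈ O <;> simp [h] <;> tauto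
  rw [show (XO.topology O : TopologicalSpace (XO X O)) =
    TopologicalSpace.coinduced (qO O) inferInstance from rfl]
  rw [isOpen_coinduced, hpre]
  exact (isOpen_univ.prod (hO.inter hA)).union (hαc.prod hA)

end XOFacts

section LeOneFacts

variable {O : Set X}

lemma leOne_mono {α α' : OSet Circle} {A A' : OSet X}
    (hα : ∀ p q, α.le p q → α'.le p q) (hA : ∀ p q, A.le p q → A'.le p q)
    {u v : XO X O} (h : leOne O α A u v) : leOne O α' A' u v := by
  obtain ⟨x, x', h1, h2, h3, h4⟩ := h
  exact ⟨x, x', hα _ _ h1, hA _ _ h2, h3, h4⟩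

lemma UOSet_le_mono {α α' : OSet Circle} {A A' : OSet X}
    (hα : ∀ p q, α.le p q → α'.le p q) (hA : ∀ p q, A.le p q → A'.le p q)
    {u v : XO X O} (h : (UOSet O α A).le u v) : (UOSet O α' A').le u v :=
  Relation.TransGen.mono (fun _ _ h' => leOne_mono hα hA h') _ _ h

/-- Retarget a `leOne` step whose carrier lies inside `O` to an arbitrary arc. -/
lemma leOne_inl_retarget {α α' : OSet Circle} {A A' : OSet X}
    (hsub : ∀ p q, A.le p q → A'.le p q)
    (hle_mem : ∀ p q, A.le p q → p ∈ A.carrier ∧ q ∈ A.carrier)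
    (hAO : A.carrier ⊆ O) {s₀ : Circle} (hs₀ : α'.le s₀ s₀)
    {u v : XO X O} (h : leOne O α A u v) : leOne O α' A' u v := by
  obtain ⟨⟨s₁, t₁⟩, ⟨s₂, t₂⟩, h1, h2, h3, h4⟩ := h
  have ht₁ : t₁ ∈ O := hAO (hle_mem _ _ h2).1
  have ht₂ : t₂ ∈ O := hAO (hle_mem _ _ h2).2
  refine ⟨(s₀, t₁), (s₀, t₂), hs₀, hsub _ _ h2, ?_, ?_⟩
  · rw [qO_mem ht₁]; rw [qO_mem ht₁] at h3; exact h3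
  · rw [qO_mem ht₂]; rw [qO_mem ht₂] at h4; exact h4

lemma leOne_p2 {α : OSet Circle} {A : OSet X} {u v : XO X O} (h : leOne O α A u v) :
    A.le (XO.p2 u) (XO.p2 v) ∧ u ∈ Set.range (qO O) ∧ v ∈ Set.range (qO O) := by
  obtain ⟨⟨s₁, t₁⟩, ⟨s₂, t₂⟩, _, h2, h3, h4⟩ := h
  refine ⟨?_, ⟨_, h3⟩, ⟨_, h4⟩⟩
  rw [← h3, ← h4, p2_qO, p2_qO]
  exact h2

lemma leOne_inr_arc {α : OSet Circle} {A : OSet X} {s s' : Circle} {t t' : ↥(Oᶜ)}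
    (h : leOne O α A (Sum.inr (s, t)) (Sum.inr (s', t'))) : α.le s s' := by
  obtain ⟨x, x', h1, _, h3, h4⟩ := h
  rw [qO_eq_inr h3] at h1
  rw [qO_eq_inr h4] at h1
  exact h1

/-- The key invariant satisfied by the transitive closure of `≤¹`. -/
lemma UOSet_le_strong {α : OSet Circle} {A : OSet X} (hαP : α.IsPoset) (hAP : A.IsPoset)
    {u v : XO X O} (h : (UOSet O α A).le u v) :
    A.le (XO.p2 u) (XO.p2 v) ∧ u ∈ Set.range (qO O) ∧ v ∈ Set.range (qO O) ∧
      (XO.p2 u = XO.p2 v → ∀ (s s' : Circle) (t t' : ↥(Oᶜ)),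
        u = Sum.inr (s, t) → v = Sum.inr (s', t') → α.le s s') := by
  induction h with
  | single h =>
    obtain ⟨h1, h2, h3⟩ := leOne_p2 h
    refine ⟨h1, h2, h3, ?_⟩
    rintro _ s s' t t' rfl rfl
    exact leOne_inr_arc h
  | tail hprev hstep ih =>
    rename_i v w
    obtain ⟨i1, i2, i3, i4⟩ := ih
    obtain ⟨j1, _, j3⟩ := leOne_p2 hstep
    refine ⟨hAP.2.2.2 _ _ _ i1 j1, i2, j3, ?_⟩
    rintro hp2 s s'' t t'' rfl rfl
    -- the middle point v also has second component `t`
    have hp2v : XO.p2 v = XO.p2 (Sum.inr (s, t) : XO X O) :=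
      hAP.2.2.1 _ _ (hp2 ▸ j1) i1
    obtain ⟨⟨sv, tv⟩, rfl⟩ := i3
    have htv : tv ∉ O := by
      have : tv = (t : X) := by rw [← p2_qO (O := O) sv tv, hp2v]; rfl
      rw [this]; exact t.2
    rw [qO_not_mem htv] at hp2v i4 hstep
    have h5 : α.le s sv := i4 hp2v.symm s sv t ⟨tv, htv⟩ rfl rfl
    have h6 : α.le sv s'' := leOne_inr_arc hstep
    exact hαP.2.2.2 _ _ _ h5 h6

lemma leOne_carrier {α : OSet Circle} {A : OSet X}
    (hαmem : ∀ p q, α.le p q → p ∈ α.carrier ∧ q ∈ α.carrier)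
    (hAmem : ∀ p q, A.le p q → p ∈ A.carrier ∧ q ∈ A.carrier)
    {u v : XO X O} (h : leOne O α A u v) :
    u ∈ USet O α.carrier A.carrier ∧ v ∈ USet O α.carrier A.carrier := by
  obtain ⟨⟨s₁, t₁⟩, ⟨s₂, t₂⟩, h1, h2, h3, h4⟩ := h
  obtain ⟨hs₁, hs₂⟩ := hαmem _ _ h1
  obtain ⟨ht₁, ht₂⟩ := hAmem _ _ h2
  constructor
  · rw [← h3, qO_mem_USet]; by_cases h : t₁ ∈ O <;> simp [h, ht₁, hs₁]
  · rw [← h4, qO_mem_USet]; by_cases h : t₂ ∈ O <;> simp [h, ht₂, hs₂]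

lemma UOSet_isPoset {a b : ℝ} (h1 : 0 < b - a) (h2 : b - a < 2 * π)
    {A : OSet X} (hA : A.IsPoset) : (UOSet O (arcOSet a b) A).IsPoset := by
  have hαP := arc_isPoset h2
  refine ⟨?_, ?_, ?_, fun p q r h h' => Relation.TransGen.trans h h'⟩
  · intro p q h
    induction h with
    | single h => exact leOne_carrier (fun _ _ => arc_le_mem) hA.1 h
    | tail hprev hstep ih => exact ⟨ih.1, (leOne_carrier (fun _ _ => arc_le_mem) hA.1 hstep).2⟩
  · rintro u hu
    obtain ⟨s₀, hs₀c, hs₀⟩ := arc_nonempty h1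
    rcases u with ⟨t, ht⟩ | ⟨s, t, ht⟩
    · replace hu := (show (Sum.inl ⟨t, ht⟩ : XO X O) ∈ (UOSet O (arcOSet a b) A).carrier ↔
          _ from mem_USet_inl).1 hu
      exact Relation.TransGen.single
        ⟨(s₀, t), (s₀, t), hs₀, hA.2.1 _ hu, qO_mem ht s₀, qO_mem ht s₀⟩
    · obtain ⟨hs, htA⟩ := mem_USet_inr.1 hu
      exact Relation.TransGen.single
        ⟨(s, t), (s, t), arc_refl hs, hA.2.1 _ htA, qO_not_mem ht s, qO_not_mem ht s⟩
  · intro u v huv hvu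
    obtain ⟨i1, ⟨⟨su, tu⟩, rfl⟩, ⟨⟨sv, tv⟩, rfl⟩, i4⟩ := UOSet_le_strong hαP hA huv
    obtain ⟨j1, _, _, j4⟩ := UOSet_le_strong hαP hA hvu
    have hp2 : tu = tv := by
      have := hA.2.2.1 _ _ (by rw [p2_qO, p2_qO] at i1; exact i1)
        (by rw [p2_qO, p2_qO] at j1; exact j1)
      exact this
    subst hp2
    by_cases htu : tu ∈ O
    · simp only [qO_mem htu]; rfl
    · simp only [qO_not_mem htu] at i4 j4 ⊢
      have h5 : (arcOSet a b).le su sv := i4 rfl su sv ⟨tu, htu⟩ ⟨tu, htu⟩ rfl rfl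
      have h6 : (arcOSet a b).le sv su := j4 rfl sv su ⟨tu, htu⟩ ⟨tu, htu⟩ rfl rfl
      rw [hαP.2.2.1 _ _ h5 h6]

/-- The restricted ordered basis on `X_O`, with `A` ranging over `𝔅` itself. -/
def XOGoodBasis (𝔅 : Set (OSet X)) (O : Set X) : Set (OSet (XO X O)) :=
  {C | ∃ a b : ℝ, 0 < b - a ∧ b - a < 2 * π ∧ ∃ A ∈ 𝔅, C = UOSet O (arcOSet a b) A}

lemma XOGoodBasis_subset {𝔅 : Set (OSet X)} : XOGoodBasis 𝔅 O ⊆ XOBasis 𝔅 O := by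
  rintro C ⟨a, b, h1, h2, A, hA, rfl⟩
  exact ⟨a, b, h1, h2, A, mem_openPosets_of_mem hA, rfl⟩

end LeOneFacts

section XOBasisFacts

variable [TopologicalSpace X] {𝔅 : Set (OSet X)} {O : Set X}

lemma XOGoodBasis_isBasis (h𝔅 : IsOrderedBasis 𝔅) (hO : IsOpen O) :
    TopologicalSpace.IsTopologicalBasis (OSet.carrier '' XOGoodBasis 𝔅 O) := by
  apply TopologicalSpace.isTopologicalBasis_of_isOpen_of_nhds
  · rintro _ ⟨C, ⟨a, b, h1, h2, A, hA, rfl⟩, rfl⟩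
    exact isOpen_USet hO arc_carrier_isOpen (basis_carrier_isOpen h𝔅 hA)
  · intro u W hu hW
    have hWpre : IsOpen (qO O ⁻¹' W) := by
      rw [show (XO.topology O : TopologicalSpace (XO X O)) =
        TopologicalSpace.coinduced (qO O) inferInstance from rfl] at hW
      exact isOpen_coinduced.1 hW
    rcases u with ⟨t, ht⟩ | ⟨s, t, ht⟩
    · -- interior point of `O`
      have htube : Set.univ ×ˢ ({t} : Set X) ⊆ qO O ⁻¹' W := by
        rintro ⟨s', t'⟩ ⟨-, ht'⟩
        rcases ht' with rfl
        rw [Set.mem_preimage, qO_mem ht]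
        exact hu
      obtain ⟨u₁, v₁, hu₁o, hv₁o, hu₁, hv₁, hsub⟩ :=
        generalized_tube_lemma isCompact_univ isCompact_singleton hWpre htube
      obtain ⟨A, hA, htA, hAv⟩ := basis_shrink h𝔅 hv₁o (hv₁ rfl)
      refine ⟨(UOSet O (arcOSet 0 1) A).carrier,
        ⟨UOSet O (arcOSet 0 1) A, ⟨0, 1, by norm_num, by linarith [Real.pi_gt_three], A, hA, rfl⟩,
          rfl⟩, mem_USet_inl.2 htA, ?_⟩
      rintro w hw
      rcases w with ⟨t', ht'⟩ | ⟨s', t', ht'⟩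
      · have := mem_USet_inl.1 hw
        have : ((1 : Circle), (t' : X)) ∈ qO O ⁻¹' W :=
          hsub ⟨hu₁ (Set.mem_univ _), hAv this⟩
        rw [Set.mem_preimage, qO_mem ht'] at this
        exact this
      · obtain ⟨hs', ht'A⟩ := mem_USet_inr.1 hw
        have : (s', (t' : X)) ∈ qO O ⁻¹' W := hsub ⟨hu₁ (Set.mem_univ _), hAv ht'A⟩
        rw [Set.mem_preimage, qO_not_mem ht'] at this
        exact this
    · -- point outside `O`
      have hmem : (s, (t : X)) ∈ qO O ⁻¹' W := by
        rw [Set.mem_preimage, qO_not_mem ht]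
        exact hu
      obtain ⟨u₁, v₁, hu₁o, hv₁o, hsu₁, htv₁, hsub⟩ := isOpen_prod_iff.1 hWpre s t hmem
      obtain ⟨a, b, h1, h2, hsα, hαu₁⟩ := exists_arc_nhd hu₁o hsu₁
      obtain ⟨A, hA, htA, hAv⟩ := basis_shrink h𝔅 hv₁o htv₁
      refine ⟨(UOSet O (arcOSet a b) A).carrier,
        ⟨UOSet O (arcOSet a b) A, ⟨a, b, h1, h2, A, hA, rfl⟩, rfl⟩,
        mem_USet_inr.2 ⟨hsα, htA⟩, ?_⟩
      rintro w hw
      rcases w with ⟨t', ht'⟩ | ⟨s', t', ht'⟩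
      · have ht'A := mem_USet_inl.1 hw
        obtain ⟨s₀, hs₀, -⟩ := arc_nonempty h1
        have : (s₀, (t' : X)) ∈ qO O ⁻¹' W := hsub ⟨hαu₁ hs₀, hAv ht'A⟩
        rw [Set.mem_preimage, qO_mem ht'] at this
        exact this
      · obtain ⟨hs', ht'A⟩ := mem_USet_inr.1 hw
        have : (s', (t' : X)) ∈ qO O ⁻¹' W := hsub ⟨hαu₁ hs', hAv ht'A⟩
        rw [Set.mem_preimage, qO_not_mem ht'] at this
        exact this

lemma XOGoodBasis_isOrderedBasis (h𝔅 : IsOrderedBasis 𝔅) (hO : IsOpen O) :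
    IsOrderedBasis (XOGoodBasis 𝔅 O) := by
  refine ⟨?_, XOGoodBasis_isBasis h𝔅 hO, ?_⟩
  · rintro C ⟨a, b, h1, h2, A, hA, rfl⟩
    exact UOSet_isPoset h1 h2 (h𝔅.isPoset A hA)
  · rintro u _ ⟨a, b, h1, h2, A, hA, rfl⟩ _ ⟨a', b', h1', h2', A', hA', rfl⟩ hu hu'
    rcases u with ⟨t, ht⟩ | ⟨s, t, ht⟩
    · -- interior point: shrink `A` inside `O`
      have htA : (t : X) ∈ A.carrier := mem_USet_inl.1 hu
      have htA' : (t : X) ∈ A'.carrier := mem_USet_inl.1 hu'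
      obtain ⟨A₁, hA₁, htA₁, hsub₁, hord₁⟩ := h𝔅.compat t A hA A' hA' htA htA'
      obtain ⟨B₂, hB₂, htB₂, hB₂sub⟩ := basis_shrink h𝔅
        (hO.inter (basis_carrier_isOpen h𝔅 hA₁)) ⟨ht, htA₁⟩
      obtain ⟨A₂, hA₂, htA₂, hsub₂, hord₂⟩ := h𝔅.compat t A₁ hA₁ B₂ hB₂ htA₁ htB₂
      have hA₂O : A₂.carrier ⊆ O := fun x hx =>
        (hB₂sub (hsub₂ hx).2).1
      have hA₂A : ∀ p q, A₂.le p q → A.le p q ∧ A'.le p q := fun p q h =>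
        hord₁ p q (hord₂ p q h).1
      have hA₂P : A₂.IsPoset := h𝔅.isPoset A₂ hA₂
      refine ⟨UOSet O (arcOSet a b) A₂, ⟨a, b, h1, h2, A₂, hA₂, rfl⟩,
        mem_USet_inl.2 htA₂, ?_, ?_⟩
      · rintro w hw
        rcases w with ⟨t', ht'⟩ | ⟨s', t', ht'⟩
        · have := mem_USet_inl.1 hw
          exact ⟨mem_USet_inl.2 ((hsub₁ (hsub₂ this).1).1),
            mem_USet_inl.2 ((hsub₁ (hsub₂ this).1).2)⟩
        · exact absurd (hA₂O (mem_USet_inr.1 hw).2) ht'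
      · intro p q h
        obtain ⟨s₀, hs₀c, hs₀⟩ := arc_nonempty h1
        obtain ⟨s₀', hs₀c', hs₀'⟩ := arc_nonempty h1'
        constructor
        · exact UOSet_le_mono (fun _ _ h' => h') (fun p q h' => (hA₂A p q h').1) h
        · exact Relation.TransGen.mono (fun _ _ h' =>
            leOne_inl_retarget (fun p q h'' => (hA₂A p q h'').2) hA₂P.1 hA₂O hs₀' h') _ _ h
    · -- exterior point: shrink both the arc and `A`
      obtain ⟨hsα, htA⟩ := mem_USet_inr.1 hu
      obtain ⟨hsα', htA'⟩ := mem_USet_inr.1 hu'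
      obtain ⟨A₁, hA₁, htA₁, hsub₁, hord₁⟩ := h𝔅.compat t A hA A' hA' htA htA'
      obtain ⟨c, d, hcd1, hcd2, hsc, hcsub, hcord⟩ := arc_shrink h2 h2' hsα hsα'
      refine ⟨UOSet O (arcOSet c d) A₁, ⟨c, d, hcd1, hcd2, A₁, hA₁, rfl⟩,
        mem_USet_inr.2 ⟨hsc, htA₁⟩, ?_, ?_⟩
      · rintro w hw
        rcases w with ⟨t', ht'⟩ | ⟨s', t', ht'⟩
        · have := mem_USet_inl.1 hw
          exact ⟨mem_USet_inl.2 (hsub₁ this).1, mem_USet_inl.2 (hsub₁ this).2⟩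
        · obtain ⟨hs', ht'A⟩ := mem_USet_inr.1 hw
          exact ⟨mem_USet_inr.2 ⟨(hcsub hs').1, (hsub₁ ht'A).1⟩,
            mem_USet_inr.2 ⟨(hcsub hs').2, (hsub₁ ht'A).2⟩⟩
      · intro p q h
        constructor
        · exact UOSet_le_mono (fun p q h' => (hcord p q h').1)
            (fun p q h' => (hord₁ p q h').1) h
        · exact UOSet_le_mono (fun p q h' => (hcord p q h').2)
            (fun p q h' => (hord₁ p q h').2) h

lemma qO_locIncr (h𝔅 : IsOrderedBasis 𝔅) (hO : IsOpen O) :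
    LocIncr (prodBasis dCircleBasis 𝔅) (XOBasis 𝔅 O) (qO O) := by
  rintro ⟨s, t⟩ _ ⟨a, b, h1, h2, A, hAop, rfl⟩ hmem
  by_cases ht : t ∈ O
  · -- the image is an `inl` point
    rw [qO_mem ht] at hmem
    have htA : t ∈ A.carrier := mem_USet_inl.1 hmem
    obtain ⟨B, hB, htB, hBlax⟩ := hAop t htA
    obtain ⟨B₂, hB₂, htB₂, hB₂sub⟩ := basis_shrink h𝔅
      (hO.inter (basis_carrier_isOpen h𝔅 hB)) ⟨ht, htB⟩
    obtain ⟨A', hA', htA', hsub', hord'⟩ := h𝔅.compat t B hB B₂ hB₂ htB htB₂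
    have hA'O : A'.carrier ⊆ O := fun x hx => (hB₂sub (hsub' hx).2).1
    obtain ⟨c, d, hc1, hc2, hsc⟩ := exists_arc_mem s
    obtain ⟨s₀, hs₀c, hs₀⟩ := arc_nonempty h1
    refine ⟨(arcOSet c d).prod A', ⟨arcOSet c d, arc_mem_dCircleBasis hc1 hc2, A', hA', rfl⟩,
      ⟨hsc, htA'⟩, ?_, ?_⟩
    · rintro ⟨s₁, t₁⟩ ⟨-, ht₁⟩
      have ht₁O : t₁ ∈ O := hA'O ht₁
      rw [qO_mem ht₁O]
      exact mem_USet_inl.2 (hBlax.1 (hsub' ht₁).1)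
    · rintro ⟨s₁, t₁⟩ ⟨s₂, t₂⟩ ⟨hs₁₂, ht₁₂⟩
      have ht₁ := (h𝔅.isPoset A' hA').1 _ _ ht₁₂
      have ht₁O : t₁ ∈ O := hA'O ht₁.1
      have ht₂O : t₂ ∈ O := hA'O ht₁.2
      rw [qO_mem ht₁O, qO_mem ht₂O]
      exact Relation.TransGen.single ⟨(s₀, t₁), (s₀, t₂), hs₀,
        hBlax.2 _ _ (hord' _ _ ht₁₂).1, qO_mem ht₁O s₀, qO_mem ht₂O s₀⟩
  · -- the image is an `inr` point
    rw [qO_not_mem ht] at hmem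
    obtain ⟨hsα, htA⟩ := mem_USet_inr.1 hmem
    obtain ⟨B, hB, htB, hBlax⟩ := hAop t htA
    refine ⟨(arcOSet a b).prod B, ⟨arcOSet a b, arc_mem_dCircleBasis h1 h2, B, hB, rfl⟩,
      ⟨hsα, htB⟩, ?_, ?_⟩
    · rintro ⟨s₁, t₁⟩ ⟨hs₁, ht₁⟩
      by_cases ht₁O : t₁ ∈ O
      · rw [qO_mem ht₁O]
        exact mem_USet_inl.2 (hBlax.1 ht₁)
      · rw [qO_not_mem ht₁O]
        exact mem_USet_inr.2 ⟨hs₁, hBlax.1 ht₁⟩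
    · rintro ⟨s₁, t₁⟩ ⟨s₂, t₂⟩ ⟨hs₁₂, ht₁₂⟩
      exact Relation.TransGen.single ⟨(s₁, t₁), (s₂, t₂), hs₁₂,
        hBlax.2 _ _ ht₁₂, rfl, rfl⟩

end XOBasisFacts

section KsetFacts

variable [TopologicalSpace X] {𝔅 : Set (OSet X)}

/-- The set `K(f)` is a neighbourhood of each of its points, for `f` locally
increasing on `S⃗¹ × X`. -/
lemma Kset_nhd {Yc : Type v} [TopologicalSpace Yc] {𝔟 : Set (OSet Yc)}
    (h𝔅 : IsOrderedBasis 𝔅) (h𝔟 : IsOrderedBasis 𝔟)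
    {f : Circle × X → Yc} (hf : LocIncr (prodBasis dCircleBasis 𝔅) 𝔟 f)
    {t : X} (ht : t ∈ Kset f) :
    ∃ A ∈ 𝔅, t ∈ A.carrier ∧ A.carrier ⊆ Kset f := by
  classical
  have hpi := Real.pi_pos
  -- a basis element of `Y` around the common value
  obtain ⟨_, ⟨B', hB', rfl⟩, hfB', -⟩ :=
    h𝔟.isBasis.exists_subset_of_mem_open (Set.mem_univ (f (1, t))) isOpen_univ
  have hB'P := h𝔟.isPoset B' hB'
  have hconst : ∀ s : Circle, f (s, t) = f (1, t) := fun s => ht s 1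
  -- local data at every angle
  have LD : ∀ x : ℝ, ∃ (ξ a b : ℝ) (A₂ : OSet X), A₂ ∈ 𝔅 ∧ t ∈ A₂.carrier ∧
      a < ξ ∧ ξ < b ∧ Circle.exp ξ = Circle.exp x ∧
      (∀ y z : ℝ, y ∈ Set.Ioo a b → z ∈ Set.Ioo a b → y ≤ z → ∀ t' ∈ A₂.carrier,
        B'.le (f (Circle.exp y, t')) (f (Circle.exp z, t'))) ∧
      (∀ y : ℝ, y ∈ Set.Ioo a b → ∀ t' ∈ A₂.carrier,
        f (Circle.exp y, t') ∈ B'.carrier) := by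
    intro x
    have hmem : f (Circle.exp x, t) ∈ B'.carrier := by rw [hconst]; exact hfB'
    obtain ⟨_, ⟨β, ⟨a, b, hab1, hab2, rfl⟩, A₂, hA₂, rfl⟩, hmemC, himg, hincr⟩ :=
      hf (Circle.exp x, t) B' hB' hmem
    obtain ⟨hxβ, htA₂⟩ := hmemC
    obtain ⟨ξ, hξ, hexpξ⟩ := hxβ
    refine ⟨ξ, a, b, A₂, hA₂, htA₂, hξ.1, hξ.2, hexpξ, ?_, ?_⟩
    · intro y z hy hz hyz t' ht'
      exact hincr (Circle.exp y, t') (Circle.exp z, t')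
        ⟨⟨y, hy, z, hz, hyz, rfl, rfl⟩, (h𝔅.isPoset A₂ hA₂).2.1 t' ht'⟩
    · intro y hy t' ht'
      exact himg (Circle.exp y, t') ⟨⟨y, hy, rfl⟩, ht'⟩
  set P : ℝ → Prop := fun x => ∃ A ∈ 𝔅, t ∈ A.carrier ∧ ∀ t' ∈ A.carrier,
    ∀ y z : ℝ, 0 ≤ y → y ≤ z → z ≤ x →
      B'.le (f (Circle.exp y, t')) (f (Circle.exp z, t')) with hP
  have hmono : ∀ x x' : ℝ, x' ≤ x → P x → P x' := by
    rintro x x' hx ⟨A, hA, htA, hprop⟩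
    exact ⟨A, hA, htA, fun t' ht' y z hy hyz hz => hprop t' ht' y z hy hyz (le_trans hz hx)⟩
  have base : P 0 := by
    obtain ⟨ξ, a, b, A₂, hA₂, htA₂, hξ1, hξ2, hexpξ, _, hmem'⟩ := LD 0
    refine ⟨A₂, hA₂, htA₂, ?_⟩
    intro t' ht' y z hy hyz hz
    have hy0 : y = 0 := le_antisymm (le_trans hyz hz) hy
    have hz0 : z = 0 := le_antisymm hz (le_trans hy hyz)
    subst hy0; subst hz0
    have hmem0 : f (Circle.exp 0, t') ∈ B'.carrier := by
      rw [← hexpξ]; exact hmem' ξ ⟨hξ1, hξ2⟩ t' ht'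
    exact hB'P.2.1 _ hmem0
  have KS : ∀ x : ℝ, 0 ≤ x → P x → ∃ ε > 0, P (x + ε) := by
    rintro x hx ⟨A₁, hA₁, htA₁, hprop₁⟩
    obtain ⟨ξ, a, b, A₂, hA₂, htA₂, hξ1, hξ2, hexpξ, hincr, hmem'⟩ := LD x
    obtain ⟨m, hm⟩ := Circle.exp_eq_exp.1 hexpξ
    have hrep : ∀ w : ℝ, Circle.exp (ξ + (w - x)) = Circle.exp w := by
      intro w
      rw [show ξ + (w - x) = w + (m : ℝ) * (2 * π) by linarith]
      exact circleExp_add_int_mul w m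
    set ε := (b - ξ) / 2 with hε
    have hε0 : 0 < ε := by simp [hε]; linarith
    obtain ⟨A, hA, htA, hAsub⟩ := basis_shrink h𝔅
      ((basis_carrier_isOpen h𝔅 hA₁).inter (basis_carrier_isOpen h𝔅 hA₂)) ⟨htA₁, htA₂⟩
    refine ⟨ε, hε0, A, hA, htA, ?_⟩
    intro t' ht' y z hy hyz hz
    have ht'A₁ : t' ∈ A₁.carrier := (hAsub ht').1
    have ht'A₂ : t' ∈ A₂.carrier := (hAsub ht').2
    have harc : ∀ y' z' : ℝ, x ≤ y' → y' ≤ z' → z' ≤ x + ε →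
        B'.le (f (Circle.exp y', t')) (f (Circle.exp z', t')) := by
      intro y' z' h1 h2 h3
      have h4 : ξ + (y' - x) ∈ Set.Ioo a b := ⟨by linarith, by linarith⟩
      have h5 : ξ + (z' - x) ∈ Set.Ioo a b := ⟨by linarith, by linarith⟩
      have := hincr _ _ h4 h5 (by linarith) t' ht'A₂
      rwa [hrep y', hrep z'] at this
    rcases le_or_gt z x with hzx | hzx
    · exact hprop₁ t' ht'A₁ y z hy hyz hzx
    · rcases le_or_gt y x with hyx | hyx
      · exact hB'P.2.2.2 _ _ _ (hprop₁ t' ht'A₁ y x hy hyx (le_refl x))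
          (harc x z (le_refl x) (le_of_lt hzx) hz)
      · exact harc y z (le_of_lt hyx) hyz hz
  have LC : ∀ x : ℝ, 0 < x → (∀ y : ℝ, 0 ≤ y → y < x → P y) → P x := by
    intro x hx hall
    obtain ⟨ξ, a, b, A₂, hA₂, htA₂, hξ1, hξ2, hexpξ, hincr, hmem'⟩ := LD x
    obtain ⟨m, hm⟩ := Circle.exp_eq_exp.1 hexpξ
    have hrep : ∀ w : ℝ, Circle.exp (ξ + (w - x)) = Circle.exp w := by
      intro w
      rw [show ξ + (w - x) = w + (m : ℝ) * (2 * π) by linarith]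
      exact circleExp_add_int_mul w m
    set δ := min ((ξ - a) / 2) (x / 2) with hδ
    have hδ0 : 0 < δ := lt_min (by linarith) (by linarith)
    have hδ1 : δ ≤ (ξ - a) / 2 := min_le_left _ _
    have hδ2 : δ ≤ x / 2 := min_le_right _ _
    obtain ⟨A₁, hA₁, htA₁, hprop₁⟩ := hall (x - δ) (by linarith) (by linarith)
    obtain ⟨A, hA, htA, hAsub⟩ := basis_shrink h𝔅
      ((basis_carrier_isOpen h𝔅 hA₁).inter (basis_carrier_isOpen h𝔅 hA₂)) ⟨htA₁, htA₂⟩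
    refine ⟨A, hA, htA, ?_⟩
    intro t' ht' y z hy hyz hz
    have ht'A₁ : t' ∈ A₁.carrier := (hAsub ht').1
    have ht'A₂ : t' ∈ A₂.carrier := (hAsub ht').2
    have harc : ∀ y' z' : ℝ, x - δ ≤ y' → y' ≤ z' → z' ≤ x →
        B'.le (f (Circle.exp y', t')) (f (Circle.exp z', t')) := by
      intro y' z' h1 h2 h3
      have h4 : ξ + (y' - x) ∈ Set.Ioo a b := ⟨by linarith, by linarith⟩
      have h5 : ξ + (z' - x) ∈ Set.Ioo a b := ⟨by linarith, by linarith⟩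
      have := hincr _ _ h4 h5 (by linarith) t' ht'A₂
      rwa [hrep y', hrep z'] at this
    rcases le_or_gt z (x - δ) with hzδ | hzδ
    · exact hprop₁ t' ht'A₁ y z hy hyz hzδ
    · rcases le_or_gt y (x - δ) with hyδ | hyδ
      · exact hB'P.2.2.2 _ _ _ (hprop₁ t' ht'A₁ y (x - δ) hy hyδ (le_refl _))
          (harc (x - δ) z (le_refl _) (le_of_lt hzδ) hz)
      · exact harc y z (le_of_lt hyδ) hyz hz
  -- the supremum argument
  have hP2π : P (2 * π) := by
    set T : Set ℝ := {x : ℝ | 0 ≤ x ∧ x ≤ 2 * π ∧ P x} with hT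
    have hT0 : (0 : ℝ) ∈ T := ⟨le_refl 0, by linarith, base⟩
    have hTne : T.Nonempty := ⟨0, hT0⟩
    have hTbdd : BddAbove T := ⟨2 * π, fun x hx => hx.2.1⟩
    set c := sSup T with hc
    have hc0 : 0 ≤ c := le_csSup hTbdd hT0
    have hc2 : c ≤ 2 * π := csSup_le hTne fun x hx => hx.2.1
    have hPc : P c := by
      rcases eq_or_lt_of_le hc0 with hceq | hclt
      · rw [← hceq]; exact base
      · refine LC c hclt ?_
        intro y hy0 hyc
        obtain ⟨x, hxT, hyx⟩ := exists_lt_of_lt_csSup hTne hyc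
        exact hmono x y (le_of_lt hyx) hxT.2.2
    rcases eq_or_lt_of_le hc2 with hceq | hclt
    · rw [← hceq]; exact hPc
    · exfalso
      obtain ⟨ε, hε0, hPε⟩ := KS c hc0 hPc
      set ε' := min ε (2 * π - c) with hε'
      have hε'0 : 0 < ε' := lt_min hε0 (by linarith)
      have hcmem : c + ε' ∈ T :=
        ⟨by linarith, by linarith [min_le_right ε (2 * π - c)],
          hmono (c + ε) (c + ε') (by linarith [min_le_left ε (2 * π - c)]) hPε⟩
      have := le_csSup hTbdd hcmem
      linarith
  obtain ⟨A, hA, htA, hprop⟩ := hP2π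
  refine ⟨A, hA, htA, ?_⟩
  intro t' ht' s s'
  have hS : ∀ s : Circle, f (s, t') = f (Circle.exp 0, t') := by
    intro s
    obtain ⟨y, hy0, hy2, rfl⟩ := exists_exp_Icc s
    have h₁ : B'.le (f (Circle.exp 0, t')) (f (Circle.exp y, t')) :=
      hprop t' ht' 0 y (le_refl 0) hy0 hy2
    have h₂ : B'.le (f (Circle.exp y, t')) (f (Circle.exp (2 * π), t')) :=
      hprop t' ht' y (2 * π) hy0 hy2 (le_refl _)
    have e : Circle.exp (2 * π) = Circle.exp 0 := by
      rw [Circle.exp_two_pi, Circle.exp_zero]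
    rw [e] at h₂
    exact hB'P.2.2.1 _ _ h₂ h₁
  rw [hS s, hS s']

end KsetFacts

section Factor

variable {O : Set X}

/-- The factorization of an `S¹`-invariant-on-`O` map through `q_O`. -/
noncomputable def hFactor {Yc : Type v'} (O : Set X) (f : Circle × X → Yc) : XO X O → Yc :=
  Sum.elim (fun t => f (1, (t : X))) (fun p => f (p.1, (p.2 : X)))

lemma hFactor_qO {Yc : Type v'} {f : Circle × X → Yc} (hOK : O ⊆ Kset f) (p : Circle × X) :
    hFactor O f (qO O p) = f p := by
  obtain ⟨s, t⟩ := p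
  by_cases h : t ∈ O
  · rw [qO_mem h]
    exact hOK h 1 s
  · rw [qO_not_mem h]
    rfl

variable [TopologicalSpace X] {𝔅 : Set (OSet X)}

lemma hFactor_locIncr {Yc : Type v'} {𝔟 : Set (OSet Yc)}
    (h𝔅 : IsOrderedBasis 𝔅) (hO : IsOpen O) (h𝔟P : ∀ B ∈ 𝔟, OSet.IsPoset B)
    {f : Circle × X → Yc} (hf : LocIncr (prodBasis dCircleBasis 𝔅) 𝔟 f)
    (hOK : O ⊆ Kset f) :
    LocIncr (XOGoodBasis 𝔅 O) 𝔟 (hFactor O f) := by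
  intro u B' hB' hmem
  have hB'P := h𝔟P B' hB'
  rcases u with ⟨t, ht⟩ | ⟨s, t, ht⟩
  · -- `inl` point
    obtain ⟨_, ⟨β, ⟨a, b, hab1, hab2, rfl⟩, A₁, hA₁, rfl⟩, ⟨h1β, htA₁⟩, himg, hincr⟩ :=
      hf (1, (t : X)) B' hB' hmem
    obtain ⟨B₂, hB₂, htB₂, hB₂sub⟩ := basis_shrink h𝔅
      (hO.inter (basis_carrier_isOpen h𝔅 hA₁)) ⟨ht, htA₁⟩
    obtain ⟨A, hA, htA, hsub, hord⟩ := h𝔅.compat t A₁ hA₁ B₂ hB₂ htA₁ htB₂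
    have hAO : A.carrier ⊆ O := fun x hx => (hB₂sub (hsub hx).2).1
    have hAP := h𝔅.isPoset A hA
    refine ⟨UOSet O (arcOSet a b) A, ⟨a, b, hab1, hab2, A, hA, rfl⟩,
      mem_USet_inl.2 htA, ?_, ?_⟩
    · rintro (⟨t', ht'⟩ | ⟨s', t', ht'⟩) hw
      · exact himg (1, (t' : X)) ⟨h1β, (hsub (mem_USet_inl.1 hw)).1⟩
      · exact absurd (hAO (mem_USet_inr.1 hw).2) ht'
    · intro p q h
      induction h with
      | single h =>
        obtain ⟨⟨s₁, t₁⟩, ⟨s₂, t₂⟩, hs₁₂, ht₁₂, h3, h4⟩ := h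
        have ht₁ := hAP.1 _ _ ht₁₂
        have ht₁O : t₁ ∈ O := hAO ht₁.1
        have ht₂O : t₂ ∈ O := hAO ht₁.2
        rw [← h3, ← h4, qO_mem ht₁O, qO_mem ht₂O]
        exact hincr (1, t₁) (1, t₂) ⟨arc_refl h1β, (hord _ _ ht₁₂).1⟩
      | tail hprev hstep ih =>
        obtain ⟨⟨s₁, t₁⟩, ⟨s₂, t₂⟩, hs₁₂, ht₁₂, h3, h4⟩ := hstep
        have ht₁ := hAP.1 _ _ ht₁₂
        have ht₁O : t₁ ∈ O := hAO ht₁.1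
        have ht₂O : t₂ ∈ O := hAO ht₁.2
        refine hB'P.2.2.2 _ _ _ ih ?_
        rw [← h3, ← h4, qO_mem ht₁O, qO_mem ht₂O]
        exact hincr (1, t₁) (1, t₂) ⟨arc_refl h1β, (hord _ _ ht₁₂).1⟩
  · -- `inr` point
    obtain ⟨_, ⟨β, ⟨a, b, hab1, hab2, rfl⟩, A₀, hA₀, rfl⟩, ⟨hsβ, htA₀⟩, himg, hincr⟩ :=
      hf (s, (t : X)) B' hB' hmem
    refine ⟨UOSet O (arcOSet a b) A₀, ⟨a, b, hab1, hab2, A₀, hA₀, rfl⟩,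
      mem_USet_inr.2 ⟨hsβ, htA₀⟩, ?_, ?_⟩
    · rintro (⟨t', ht'⟩ | ⟨s', t', ht'⟩) hw
      · have ht'A := mem_USet_inl.1 hw
        have : hFactor O f (Sum.inl ⟨t', ht'⟩) = f (s, t') := hOK ht' 1 s
        rw [this]
        exact himg (s, t') ⟨hsβ, ht'A⟩
      · obtain ⟨hs', ht'A⟩ := mem_USet_inr.1 hw
        exact himg (s', (t' : X)) ⟨hs', ht'A⟩
    · intro p q h
      induction h with
      | single h =>
        obtain ⟨⟨s₁, t₁⟩, ⟨s₂, t₂⟩, hs₁₂, ht₁₂, h3, h4⟩ := h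
        rw [← h3, ← h4, hFactor_qO hOK, hFactor_qO hOK]
        exact hincr (s₁, t₁) (s₂, t₂) ⟨hs₁₂, ht₁₂⟩
      | tail hprev hstep ih =>
        obtain ⟨⟨s₁, t₁⟩, ⟨s₂, t₂⟩, hs₁₂, ht₁₂, h3, h4⟩ := hstep
        refine hB'P.2.2.2 _ _ _ ih ?_
        rw [← h3, ← h4, hFactor_qO hOK, hFactor_qO hOK]
        exact hincr (s₁, t₁) (s₂, t₂) ⟨hs₁₂, ht₁₂⟩

end Factor

section Coeq

variable [TopologicalSpace X] {𝔅 : Set (OSet X)} {O : Set X}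

/-- The master lemma: if `O` is the smallest open neighbourhood of `star`, then
`q_O` is a coequalizer w.r.t. any ordered basis `𝔠` between `XOGoodBasis` and
`XOBasis`. -/
lemma qO_isCoeq (h𝔅 : IsOrderedBasis 𝔅) {star : X} (hO : IsOpen O) (hstar : star ∈ O)
    (hmin : ∀ U : Set X, IsOpen U → star ∈ U → O ⊆ U)
    {𝔠 : Set (OSet (XO X O))} (hc1 : XOGoodBasis 𝔅 O ⊆ 𝔠) (hc2 : 𝔠 ⊆ XOBasis 𝔅 O) :
    IsCoeqIn (fun _ : LocOrdSpace.{u} => True) (prodBasis dCircleBasis 𝔅) 𝔠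
      (fun s : Circle => (s, star)) (fun _ : Circle => ((1 : Circle), star)) (qO O) := by
  refine ⟨?_, ?_, ?_⟩
  · intro x B' hB' hmem
    exact qO_locIncr h𝔅 hO x B' (hc2 hB') hmem
  · funext s
    simp only [Function.comp_apply]
    rw [qO_mem hstar, qO_mem hstar]
  · rintro Y - f hf hfeq
    letI : TopologicalSpace Y.carrier := Y.top
    have hstarK : star ∈ Kset f := by
      intro s s'
      have h := congrFun hfeq
      simp only [Function.comp_apply] at h
      rw [h s, h s']
    obtain ⟨A, hA, hstA, hAK⟩ := Kset_nhd h𝔅 Y.isBasis hf hstarK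
    have hOK : O ⊆ Kset f := fun x hx =>
      hAK (hmin A.carrier (basis_carrier_isOpen h𝔅 hA) hstA hx)
    refine ⟨hFactor O f, ⟨?_, ?_⟩, ?_⟩
    · intro u B' hB' hmem
      obtain ⟨B, hB, h3, h4, h5⟩ :=
        hFactor_locIncr h𝔅 hO Y.isBasis.isPoset hf hOK u B' hB' hmem
      exact ⟨B, hc1 hB, h3, h4, h5⟩
    · funext p
      exact (hFactor_qO hOK p).symm
    · rintro h' ⟨-, heq⟩
      funext u
      obtain ⟨p, rfl⟩ := qO_surjective_s10 u
      rw [hFactor_qO hOK p]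
      exact (congrFun heq p).symm

lemma smallest_of_coeq (h𝔅 : IsOrderedBasis 𝔅) (star : X)
    (hex : ∃ (C : LocOrdSpace.{u}) (g : Circle × X → C.carrier),
      IsCoeqIn (fun _ : LocOrdSpace.{u} => True) (prodBasis dCircleBasis 𝔅) C.basis
        (fun s : Circle => (s, star)) (fun _ : Circle => ((1 : Circle), star)) g) :
    ∃ O : Set X, (IsOpen O ∧ star ∈ O) ∧
      ∀ U : Set X, IsOpen U → star ∈ U → O ⊆ U := by
  obtain ⟨C, g, hg, hgeq, huniv⟩ := hex
  letI : TopologicalSpace C.carrier := C.top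
  have hstarK : star ∈ Kset g := by
    intro s s'
    have h := congrFun hgeq
    simp only [Function.comp_apply] at h
    rw [h s, h s']
  have hKopen : IsOpen (Kset g) := by
    rw [isOpen_iff_forall_mem_open]
    intro x hx
    obtain ⟨A, hA, hxA, hAK⟩ := Kset_nhd h𝔅 C.isBasis hg hx
    exact ⟨A.carrier, hAK, basis_carrier_isOpen h𝔅 hA, hxA⟩
  refine ⟨Kset g, ⟨hKopen, hstarK⟩, ?_⟩
  intro U hU hstarU x hxK
  by_contra hxU
  -- test against `X_U`
  set YU : LocOrdSpace.{u} :=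
    ⟨XO X U, XO.topology U, XOGoodBasis 𝔅 U, XOGoodBasis_isOrderedBasis h𝔅 hU⟩ with hYU
  have hfU : LocIncr (prodBasis dCircleBasis 𝔅) (XOGoodBasis 𝔅 U) (qO U) :=
    fun p B' hB' hmem => qO_locIncr h𝔅 hU p B' (XOGoodBasis_subset hB') hmem
  have hfeq : (qO U) ∘ (fun s : Circle => (s, star)) =
      (qO U) ∘ (fun _ : Circle => ((1 : Circle), star)) := by
    funext s
    simp only [Function.comp_apply]
    rw [qO_mem hstarU, qO_mem hstarU]
  obtain ⟨h, ⟨-, hcomp⟩, -⟩ := huniv YU trivial (qO U) hfU hfeq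
  have hsep : qO U ((1 : Circle), x) = qO U (Circle.exp π, x) := by
    rw [hcomp]
    simp only [Function.comp_apply]
    rw [hxK 1 (Circle.exp π)]
  rw [qO_not_mem hxU, qO_not_mem hxU] at hsep
  have h1 : (1 : Circle) = Circle.exp π := (Prod.mk.injEq .. ▸ (Sum.inr.injEq .. ▸ hsep)).1
  have hpi := Real.pi_pos
  have hpi4 := Real.pi_lt_d2
  have hpi3 := Real.pi_gt_three
  have : (0 : ℝ) = π := by
    refine circleExp_injOn (a := -1) (b := 4) (by linarith) ⟨by norm_num, by norm_num⟩
      ⟨by linarith, by linarith⟩ ?_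
    rw [Circle.exp_zero]
    exact h1
  linarith

end Coeq

end Aux

/-- In the category of locally ordered spaces, the pair
`i⋆, c⋆ : S¹ → S⃗¹ × X` has a coequalizer iff the family of open neighbourhoods
of `⋆` has a smallest element; and if `O` is this smallest open neighbourhood
then `q_O` is the coequalizer. -/
theorem stmt10 {X : Type u} [TopologicalSpace X] (𝔅 : Set (OSet X))
    (h𝔅 : IsOrderedBasis 𝔅) (star : X) :
    ((∃ (C : LocOrdSpace.{u}) (g : Circle × X → C.carrier),
        IsCoeqIn (fun _ : LocOrdSpace.{u} => True) (prodBasis dCircleBasis 𝔅) C.basis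
          (fun s : Circle => (s, star)) (fun _ : Circle => ((1 : Circle), star)) g) ↔
      ∃ O : Set X, (IsOpen O ∧ star ∈ O) ∧
        ∀ U : Set X, IsOpen U → star ∈ U → O ⊆ U) ∧
    ∀ O : Set X, IsOpen O → star ∈ O → (∀ U : Set X, IsOpen U → star ∈ U → O ⊆ U) →
      IsCoeqIn (fun _ : LocOrdSpace.{u} => True) (prodBasis dCircleBasis 𝔅) (XOBasis 𝔅 O)
        (fun s : Circle => (s, star)) (fun _ : Circle => ((1 : Circle), star)) (qO O) := by
  constructor
  · constructor
    · exact fun hex => smallest_of_coeq h𝔅 star hex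
    · rintro ⟨O, ⟨hO, hstarO⟩, hmin⟩
      exact ⟨⟨XO X O, XO.topology O, XOGoodBasis 𝔅 O, XOGoodBasis_isOrderedBasis h𝔅 hO⟩,
        qO O, qO_isCoeq h𝔅 hO hstarO hmin (Set.Subset.refl _) XOGoodBasis_subset⟩
  · intro O hO hstarO hmin
    exact qO_isCoeq h𝔅 hO hstarO hmin XOGoodBasis_subset (Set.Subset.refl _)
end

section
/- Let X and Y be topological spaces, with Y locally Hausdorff (every point of Y has an open neighbourhood which is a Hausdorff space in the subspace topology), and let f : S¹ × X → Y be a continuous map, where S¹ is the unit circle. Then the set K(f) := {t ∈ X : f(s,t) = f(s',t) for all s, s' ∈ S¹} is a closed subset of X. -/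
universe u v w v'

/-- If `Y` is locally Hausdorff and `f : S¹ × X → Y` is
continuous, then `K(f)` is closed in `X`. -/
theorem stmt11 {X : Type u} {Y : Type v} [TopologicalSpace X] [TopologicalSpace Y]
    (hY : ∀ y : Y, ∃ U : Set Y, IsOpen U ∧ y ∈ U ∧ T2Space U)
    (f : Circle × X → Y) (hf : Continuous f) :
    IsClosed (Kset f) := by
  have : PreconnectedSpace Circle := by
    have hs : Function.Surjective Circle.exp := fun z => ⟨_, Circle.exp_arg z⟩
    have h := isPreconnected_range Circle.exp.continuous
    rw [hs.range_eq] at h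
    exact ⟨h⟩
  rw [← closure_subset_iff_isClosed]
  intro t ht
  -- g is locally constant
  have key : ∀ s₀ : Circle, ∃ V : Set Circle, IsOpen V ∧ s₀ ∈ V ∧
      ∀ s'' ∈ V, f (s'', t) = f (s₀, t) := by
    intro s₀
    obtain ⟨U, hUopen, hyU, hT2⟩ := hY (f (s₀, t))
    have hpre : IsOpen (f ⁻¹' U) := hUopen.preimage hf
    rw [isOpen_prod_iff] at hpre
    obtain ⟨V, W, hV, hW, hs₀V, htW, hVW⟩ := hpre s₀ t hyU
    refine ⟨V, hV, hs₀V, fun s'' hs'' => ?_⟩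
    by_contra hne
    have hmem : ∀ u ∈ W, ∀ s ∈ V, f (s, u) ∈ U := fun u hu s hs =>
      hVW (Set.mk_mem_prod hs hu)
    -- points in the subtype
    set a : U := ⟨f (s'', t), hmem t htW s'' hs''⟩
    set b : U := ⟨f (s₀, t), hyU⟩
    have hab : a ≠ b := fun h => hne (congrArg Subtype.val h)
    obtain ⟨u₁, u₂, hu₁, hu₂, ha, hb, hdisj⟩ := t2_separation hab
    obtain ⟨O₁, hO₁, hO₁e⟩ := isOpen_induced_iff.mp hu₁
    obtain ⟨O₂, hO₂, hO₂e⟩ := isOpen_induced_iff.mp hu₂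
    -- open neighbourhood of t
    set N : Set X := W ∩ (fun u => f (s'', u)) ⁻¹' O₁ ∩ (fun u => f (s₀, u)) ⁻¹' O₂
    have hNopen : IsOpen N :=
      ((hW.inter (hO₁.preimage (hf.comp (Continuous.prodMk_right s'')))).inter
        (hO₂.preimage (hf.comp (Continuous.prodMk_right s₀))))
    have htN : t ∈ N := by
      refine ⟨⟨htW, ?_⟩, ?_⟩
      · have : a ∈ u₁ := ha
        rw [← hO₁e] at this; exact this
      · have : b ∈ u₂ := hb
        rw [← hO₂e] at this; exact this
    obtain ⟨k, hkN, hkK⟩ := mem_closure_iff.mp ht N hNopen htN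
    have hk1 : f (s'', k) = f (s₀, k) := hkK s'' s₀
    have hkW : k ∈ W := hkN.1.1
    set c : U := ⟨f (s'', k), hmem k hkW s'' hs''⟩
    have hc1 : c ∈ u₁ := by rw [← hO₁e]; exact hkN.1.2
    have hc2 : c ∈ u₂ := by
      rw [← hO₂e]
      show f (s'', k) ∈ O₂
      rw [hk1]; exact hkN.2
    exact hdisj.ne_of_mem hc1 hc2 rfl
  have hlc : IsLocallyConstant (fun s : Circle => f (s, t)) :=
    (IsLocallyConstant.iff_exists_open _).2 fun x => key x
  intro s s'
  exact hlc.apply_eq_of_preconnectedSpace s s'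
end

section
/- Let X be a locally ordered space whose underlying topological space is Hausdorff, ∗ ∈ X, and O an open neighbourhood of ∗. Then the space X_O, with the final topology induced by q_O, is Hausdorff if, and only if, the open set O is closed in X. -/
universe u v w v'

/-- For `X` a locally ordered space with Hausdorff underlying
topology and `O` an open neighbourhood of `⋆`, the space `X_O` (with the final
topology of `q_O`) is Hausdorff iff `O` is closed in `X`. -/
theorem stmt12 {X : Type u} [TopologicalSpace X] [T2Space X] (𝔅 : Set (OSet X))
    (h𝔅 : IsOrderedBasis 𝔅) (star : X) (O : Set X) (hO : IsOpen O) (hstar : star ∈ O) :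
    T2Space (XO X O) ↔ IsClosed O := by
  classical
  constructor
  · intro hT2
    rw [← closure_subset_iff_isClosed]
    intro t ht
    by_contra htO
    have hss' : Circle.exp 0 ≠ Circle.exp Real.pi := by
      intro h
      have h2 : (Circle.exp 0 : ℂ) = Circle.exp Real.pi := congrArg _ h
      rw [Circle.coe_exp, Circle.coe_exp] at h2
      simp [Complex.exp_pi_mul_I] at h2
      norm_num at h2
    have hne : (Sum.inr (Circle.exp 0, ⟨t, htO⟩) : XO X O) ≠
        Sum.inr (Circle.exp Real.pi, ⟨t, htO⟩) := by
      intro h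
      exact hss' (congrArg (fun u : XO X O =>
        Sum.elim (fun _ => Circle.exp 0) Prod.fst u) h)
    obtain ⟨U, V, hU, hV, hxU, hyV, hUV⟩ := @t2_separation _ (XO.topology O) hT2 _ _ hne
    have hU' : IsOpen (qO O ⁻¹' U) := hU.preimage continuous_coinduced_rng
    have hV' : IsOpen (qO O ⁻¹' V) := hV.preimage continuous_coinduced_rng
    have hxU' : (Circle.exp 0, t) ∈ qO O ⁻¹' U := by
      simp only [Set.mem_preimage, qO, htO, dif_neg, not_false_iff]; erw [dif_neg htO]; exact hxU
    have hyV' : (Circle.exp Real.pi, t) ∈ qO O ⁻¹' V := by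
      simp only [Set.mem_preimage, qO, htO, dif_neg, not_false_iff]; erw [dif_neg htO]; exact hyV
    obtain ⟨a1, W1, ha1, hW1, hs1, ht1, hsub1⟩ := (isOpen_prod_iff.mp hU') _ _ hxU'
    obtain ⟨a2, W2, ha2, hW2, hs2, ht2, hsub2⟩ := (isOpen_prod_iff.mp hV') _ _ hyV'
    obtain ⟨t', ht'W, ht'O⟩ := mem_closure_iff.mp ht (W1 ∩ W2) (hW1.inter hW2) ⟨ht1, ht2⟩
    have h1 : qO O (Circle.exp 0, t') ∈ U := hsub1 ⟨hs1, ht'W.1⟩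
    have h2 : qO O (Circle.exp Real.pi, t') ∈ V := hsub2 ⟨hs2, ht'W.2⟩
    simp only [qO, dif_pos ht'O] at h1 h2
    erw [dif_pos ht'O] at h1 h2
    exact Set.disjoint_left.mp hUV h1 h2
  · intro hOcl
    have hOc : IsOpen Oᶜ := hOcl.isOpen_compl
    have hqc : @Continuous _ _ _ instTopologicalSpaceSum (qO O) := by
      erw [continuous_def]
      intro U hU
      rw [isOpen_sum_iff] at hU
      obtain ⟨h1, h2⟩ := hU
      have key : qO O ⁻¹' U =
          (Prod.snd ⁻¹' (Subtype.val '' (Sum.inl ⁻¹' U : Set ↥O))) ∪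
          ((Prod.map id Subtype.val) '' (Sum.inr ⁻¹' U : Set (Circle × ↥(Oᶜ)))) := by
        ext ⟨a, b⟩
        simp only [Set.mem_preimage, Set.mem_union, Set.mem_image, qO]
        change qO O (a, b) ∈ U ↔ _
        unfold qO
        by_cases hb : b ∈ O
        · erw [dif_pos hb]
          constructor
          · intro h; exact Or.inl ⟨⟨b, hb⟩, h, rfl⟩
          · rintro (⟨x, hx, hxb⟩ | ⟨p, _, hp⟩)
            · cases hxb; exact hx
            · exfalso; apply p.2.2
              have : p.2.val = b := congrArg Prod.snd hp
              rw [this]; exact hb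
        · erw [dif_neg hb]
          constructor
          · intro h; exact Or.inr ⟨(a, ⟨b, hb⟩), h, rfl⟩
          · rintro (⟨x, _, hxb⟩ | ⟨p, hp, hpe⟩)
            · exact absurd (hxb ▸ x.2) hb
            · have ha : p.1 = a := congrArg Prod.fst hpe
              have hb' : p.2.val = b := congrArg Prod.snd hpe
              have : p = (a, ⟨b, hb⟩) := by
                obtain ⟨p1, p2⟩ := p
                simp only [Prod.mk.injEq]
                exact ⟨ha, Subtype.ext hb'⟩
              rwa [← this]
      erw [key]
      exact IsOpen.union (continuous_snd.isOpen_preimage _ (hO.isOpenMap_subtype_val _ h1))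
        ((IsOpenMap.id.prodMap hOc.isOpenMap_subtype_val) _ h2)
    haveI hT2sum : @T2Space (↥O ⊕ (Circle × ↥(Oᶜ))) instTopologicalSpaceSum := inferInstance
    have hid : @Continuous (XO X O) _ _ instTopologicalSpaceSum id :=
      continuous_coinduced_dom.mpr hqc
    constructor
    intro x y hxy
    obtain ⟨U, V, hU, hV, hxU, hyV, hUV⟩ :=
      @t2_separation _ instTopologicalSpaceSum hT2sum _ _ hxy
    exact ⟨U, V, hU.preimage hid, hV.preimage hid, hxU, hyV, hUV⟩
end
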